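/- arXiv:0908.4076 — 5 statements merged into one kernel-verified Lean document; each statement's English description precedes it below -/
import Mathlib

section
/- Fix integers k ≥ 2 and j ≥ 1, and a set Υ ⊆ C_k≀S_j such that red(u) = u for every (τ,u) ∈ Υ. For n ≥ 0 let A_n = Σ q^{inv(σ)} p^{coinv(σ)} r^{||w||}, summed over all (σ,w) ∈ C_k≀S_n having no Υ-bi-match, and for n ≥ 1 let B_n = Σ of the same weight over all (σ,w) ∈ C_k≀S_n having exactly one Υ-bi-match, which starts at position n−j+1. Then for every n ≥ 1, [k]_r · [n]_{p,q} · A_{n−1} = A_n + B_n. Equivalently, B(t) = ([k]_r t − 1)·A(t) + 1, where A(t) = Σ_{n≥0} A_n t^n/[n]_{p,q}! and B(t) = Σ_{n≥1} B_n t^n/[n]_{p,q}!. -/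
open Finset
open scoped Classical

noncomputable section

/-- The field of rational functions in `p, q, r, x` over `ℚ`. -/
abbrev K : Type := FractionRing (MvPolynomial (Fin 4) ℚ)

def pv : K := algebraMap (MvPolynomial (Fin 4) ℚ) K (MvPolynomial.X 0)
def qv : K := algebraMap (MvPolynomial (Fin 4) ℚ) K (MvPolynomial.X 1)
def rv : K := algebraMap (MvPolynomial (Fin 4) ℚ) K (MvPolynomial.X 2)
def xv : K := algebraMap (MvPolynomial (Fin 4) ℚ) K (MvPolynomial.X 3)

/-- The `p,q`-analogue `[m]_{p,q} = p^{m-1} + p^{m-2} q + ⋯ + q^{m-1}`. -/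
def pqInt (p q : K) (m : ℕ) : K := ∑ i ∈ Finset.range m, p ^ (m - 1 - i) * q ^ i

/-- The `p,q`-factorial `[m]_{p,q}!`. -/
def pqFac (p q : K) (m : ℕ) : K := ∏ i ∈ Finset.range m, pqInt p q (i + 1)

/-- The `p,q`-binomial coefficient `[n choose m]_{p,q}`. -/
def pqBinom (p q : K) (n m : ℕ) : K :=
  if m ≤ n then pqFac p q n / (pqFac p q m * pqFac p q (n - m)) else 0

/-- The number of inversions of a permutation of `{1, …, n}`. -/
def inv' {n : ℕ} (σ : Equiv.Perm (Fin n)) : ℕ :=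
  ((Finset.univ : Finset (Fin n × Fin n)).filter
    (fun p => p.1 < p.2 ∧ σ p.2 < σ p.1)).card

/-- The number of coinversions of a permutation of `{1, …, n}`. -/
def coinv' {n : ℕ} (σ : Equiv.Perm (Fin n)) : ℕ :=
  ((Finset.univ : Finset (Fin n × Fin n)).filter
    (fun p => p.1 < p.2 ∧ σ p.1 < σ p.2)).card

/-- `‖w‖ = w_1 + ⋯ + w_n` for a word `w ∈ {0, …, k-1}^n`. -/
def wsum {n k : ℕ} (w : Fin n → Fin k) : ℕ := ∑ i, (w i : ℕ)

/-- `redCount u a` is the value at position `a` of the reduction `red u` of the word `u`: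
the number of distinct letter values of `u` that are smaller than `u a`. -/
def redCount {j k : ℕ} (u : Fin j → Fin k) (a : Fin j) : ℕ :=
  ((Finset.univ : Finset (Fin k)).filter (fun c => c < u a ∧ ∃ b, u b = c)).card

/-- `(σ,w) ∈ C_k≀S_n` has a `Υ`-bi-match starting at (0-indexed) position `i`:
for some `(τ,u) ∈ Υ`, `red (σ_i … σ_{i+j-1}) = τ` and `red (w_i … w_{i+j-1}) = u`. -/
def biMatchAt {n : ℕ} (j k : ℕ) (Υ : Set (Equiv.Perm (Fin j) × (Fin j → Fin k)))
    (σ : Equiv.Perm (Fin n)) (w : Fin n → Fin k) (i : ℕ) : Prop :=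
  ∃ h : i + j ≤ n, ∃ τu ∈ Υ,
    (∀ a : Fin j,
      (((Finset.univ : Finset (Fin j)).filter (fun b : Fin j =>
        σ ⟨i + (b : ℕ), by have := b.isLt; omega⟩ <
          σ ⟨i + (a : ℕ), by have := a.isLt; omega⟩)).card) = (τu.1 a : ℕ)) ∧
    (∀ a : Fin j,
      redCount (fun b : Fin j => w ⟨i + (b : ℕ), by have := b.isLt; omega⟩) a = (τu.2 a : ℕ))

/-- `A_n`: the weighted count of `(σ,w) ∈ C_k≀S_n` with no `Υ`-bi-match. -/
def AΥ (j k : ℕ) (Υ : Set (Equiv.Perm (Fin j) × (Fin j → Fin k))) (n : ℕ) : K :=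
  ∑ σ : Equiv.Perm (Fin n), ∑ w : Fin n → Fin k,
    if (∀ i : ℕ, ¬ biMatchAt j k Υ σ w i) then
      qv ^ inv' σ * pv ^ coinv' σ * rv ^ wsum w else 0

/-- `B_n`: the weighted count of `(σ,w) ∈ C_k≀S_n` having exactly one `Υ`-bi-match,
which starts at (1-indexed) position `n - j + 1`. -/
def BΥ (j k : ℕ) (Υ : Set (Equiv.Perm (Fin j) × (Fin j → Fin k))) (n : ℕ) : K :=
  ∑ σ : Equiv.Perm (Fin n), ∑ w : Fin n → Fin k,
    if (biMatchAt j k Υ σ w (n - j) ∧ ∀ i : ℕ, biMatchAt j k Υ σ w i → i = n - j) then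
      qv ^ inv' σ * pv ^ coinv' σ * rv ^ wsum w else 0

-- Auxiliary lemmas

/-- insert value `v` at the last position of `σ'` -/
def ins {n : ℕ} (σ' : Equiv.Perm (Fin n)) (v : Fin (n+1)) : Equiv.Perm (Fin (n+1)) :=
  ((finSuccEquiv' (Fin.last n)).trans (Equiv.optionCongr σ')).trans (finSuccEquiv' v).symm

lemma ins_last {n : ℕ} (σ' : Equiv.Perm (Fin n)) (v : Fin (n+1)) :
    ins σ' v (Fin.last n) = v := by
  simp [ins, finSuccEquiv'_at]

lemma ins_castSucc {n : ℕ} (σ' : Equiv.Perm (Fin n)) (v : Fin (n+1)) (i : Fin n) :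
    ins σ' v (Fin.castSucc i) = v.succAbove (σ' i) := by
  simp [ins, finSuccEquiv'_last_apply_castSucc]

lemma ins_bijective (n : ℕ) :
    Function.Bijective (fun sv : Equiv.Perm (Fin n) × Fin (n+1) => ins sv.1 sv.2) := by
  rw [Fintype.bijective_iff_injective_and_card]
  constructor
  · rintro ⟨σ', v⟩ ⟨τ', u⟩ h
    simp only at h
    have hv : v = u := by rw [← ins_last σ' v, ← ins_last τ' u, h]
    subst hv
    have : σ' = τ' := by
      ext i
      have := congrArg (fun g : Equiv.Perm (Fin (n+1)) => g (Fin.castSucc i)) h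
      simp only [ins_castSucc] at this
      exact congrArg Fin.val (Fin.succAbove_right_injective this)
    simp [this]
  · simp [Fintype.card_perm, Nat.factorial_succ, Nat.mul_comm]
open Finset
open scoped Classical
noncomputable section AUX

lemma sum_split {M : Type*} [AddCommMonoid M] (n : ℕ) (F : Fin (n+1) → Fin (n+1) → M) :
    ∑ a, ∑ b, F a b = ((∑ a : Fin n, ∑ b : Fin n, F a.castSucc b.castSucc)
      + (∑ a : Fin n, F a.castSucc (Fin.last n))) + ((∑ b : Fin n, F (Fin.last n) b.castSucc)
      + F (Fin.last n) (Fin.last n)) := by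
  simp only [Fin.sum_univ_castSucc, Finset.sum_add_distrib]
  abel

lemma count_ge (n vv : ℕ) : (∑ x : Fin n, if vv ≤ (x : ℕ) then 1 else 0) = n - vv := by
  rw [Fin.sum_univ_eq_sum_range (fun i => if vv ≤ i then 1 else 0)]
  induction n with
  | zero => simp
  | succ m ih => rw [Finset.sum_range_succ, ih]; split_ifs with h <;> omega

lemma count_lt (n vv : ℕ) (h : vv ≤ n) : (∑ x : Fin n, if (x : ℕ) < vv then 1 else 0) = vv := by
  rw [Fin.sum_univ_eq_sum_range (fun i => if i < vv then 1 else 0)]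
  have : ∀ m : ℕ, (∑ i ∈ Finset.range m, if i < vv then 1 else 0) = min vv m := by
    intro m
    induction m with
    | zero => simp
    | succ m ih => rw [Finset.sum_range_succ, ih]; split_ifs with h <;> omega
  rw [this]; omega

lemma card_as_sum {m : ℕ} (p : Fin m × Fin m → Prop) [DecidablePred p] :
    ((Finset.univ : Finset (Fin m × Fin m)).filter p).card
      = ∑ a : Fin m, ∑ b : Fin m, if p (a, b) then 1 else 0 := by
  rw [Finset.card_filter, Fintype.sum_prod_type]

lemma inv'_ins {n : ℕ} (σ' : Equiv.Perm (Fin n)) (v : Fin (n+1)) :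
    inv' (ins σ' v) = inv' σ' + (n - (v : ℕ)) := by
  rw [inv', inv', card_as_sum, card_as_sum, sum_split]
  have e1 : ∀ a b : Fin n,
      (if (a.castSucc < b.castSucc ∧ ins σ' v b.castSucc < ins σ' v a.castSucc) then 1 else 0)
        = if ((a, b).1 < (a, b).2 ∧ σ' (a, b).2 < σ' (a, b).1) then (1:ℕ) else 0 := by
    intro a b
    simp [ins_castSucc, Fin.castSucc_lt_castSucc_iff, Fin.succAbove_lt_succAbove_iff]
  have e2 : (∑ a : Fin n, if (a.castSucc < Fin.last n ∧ ins σ' v (Fin.last n) < ins σ' v a.castSucc) then (1:ℕ) else 0)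
      = n - (v : ℕ) := by
    have : ∀ a : Fin n,
        (if (a.castSucc < Fin.last n ∧ ins σ' v (Fin.last n) < ins σ' v a.castSucc) then (1:ℕ) else 0)
          = if (v : ℕ) ≤ ((σ' a : Fin n) : ℕ) then 1 else 0 := by
      intro a
      rw [ins_last, ins_castSucc]
      have hc : (Fin.castSucc a < Fin.last n ∧ v < v.succAbove (σ' a)) ↔ ((v : ℕ) ≤ ((σ' a : Fin n) : ℕ)) := by
        rw [Fin.lt_succAbove_iff_le_castSucc]
        simp [Fin.castSucc_lt_last, Fin.le_def]
      simp only [hc]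
    simp only [this]
    rw [Equiv.sum_comp σ' (fun x : Fin n => if (v : ℕ) ≤ (x : ℕ) then (1:ℕ) else 0)]
    exact count_ge n v
  have e3 : ∀ b : Fin n, (if (Fin.last n < b.castSucc ∧ ins σ' v b.castSucc < ins σ' v (Fin.last n)) then (1:ℕ) else 0) = 0 := by
    intro b
    have := Fin.castSucc_lt_last b
    simp [not_lt.mpr this.le]
  simp only [e1, e2, e3]
  simp

lemma coinv'_ins {n : ℕ} (σ' : Equiv.Perm (Fin n)) (v : Fin (n+1)) :
    coinv' (ins σ' v) = coinv' σ' + (v : ℕ) := by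
  rw [coinv', coinv', card_as_sum, card_as_sum, sum_split]
  have e1 : ∀ a b : Fin n,
      (if (a.castSucc < b.castSucc ∧ ins σ' v a.castSucc < ins σ' v b.castSucc) then 1 else 0)
        = if ((a, b).1 < (a, b).2 ∧ σ' (a, b).1 < σ' (a, b).2) then (1:ℕ) else 0 := by
    intro a b
    simp [ins_castSucc, Fin.castSucc_lt_castSucc_iff, Fin.succAbove_lt_succAbove_iff]
  have e2 : (∑ a : Fin n, if (a.castSucc < Fin.last n ∧ ins σ' v a.castSucc < ins σ' v (Fin.last n)) then (1:ℕ) else 0)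
      = (v : ℕ) := by
    have : ∀ a : Fin n,
        (if (a.castSucc < Fin.last n ∧ ins σ' v a.castSucc < ins σ' v (Fin.last n)) then (1:ℕ) else 0)
          = if ((σ' a : Fin n) : ℕ) < (v : ℕ) then 1 else 0 := by
      intro a
      rw [ins_last, ins_castSucc]
      have hc : (Fin.castSucc a < Fin.last n ∧ v.succAbove (σ' a) < v) ↔ (((σ' a : Fin n) : ℕ) < (v : ℕ)) := by
        rw [Fin.succAbove_lt_iff_castSucc_lt]
        simp [Fin.castSucc_lt_last, Fin.lt_def]
      simp only [hc]
    simp only [this]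
    rw [Equiv.sum_comp σ' (fun x : Fin n => if (x : ℕ) < (v : ℕ) then (1:ℕ) else 0)]
    exact count_lt n v (Nat.lt_succ_iff.mp v.isLt)
  have e3 : ∀ b : Fin n, (if (Fin.last n < b.castSucc ∧ ins σ' v (Fin.last n) < ins σ' v b.castSucc) then (1:ℕ) else 0) = 0 := by
    intro b
    have := Fin.castSucc_lt_last b
    simp [not_lt.mpr this.le]
  simp only [e1, e2, e3]
  simp

lemma wsum_snoc {n k : ℕ} (w' : Fin n → Fin k) (c : Fin k) :
    wsum (Fin.snoc w' c) = wsum w' + (c : ℕ) := by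
  rw [wsum, Fin.sum_univ_castSucc]
  simp [wsum, Fin.snoc_castSucc, Fin.snoc_last]

end AUX
lemma biMatchAt_ins {n j k : ℕ} (Υ : Set (Equiv.Perm (Fin j) × (Fin j → Fin k)))
    (σ' : Equiv.Perm (Fin n)) (v : Fin (n+1)) (w' : Fin n → Fin k) (c : Fin k)
    (i : ℕ) (hij : i + j ≤ n) :
    biMatchAt j k Υ (ins σ' v) (Fin.snoc w' c) i ↔ biMatchAt j k Υ σ' w' i := by
  have hfin : ∀ b : Fin j, i + (b : ℕ) < n := fun b => by have := b.isLt; omega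
  have hperm : ∀ a : Fin j,
      ((Finset.univ.filter (fun b : Fin j =>
        (ins σ' v) ⟨i + (b : ℕ), by have := hfin b; omega⟩ <
          (ins σ' v) ⟨i + (a : ℕ), by have := hfin a; omega⟩)).card)
      = ((Finset.univ.filter (fun b : Fin j =>
        σ' ⟨i + (b : ℕ), hfin b⟩ < σ' ⟨i + (a : ℕ), hfin a⟩)).card) := by
    intro a
    apply congrArg Finset.card
    apply Finset.filter_congr
    intro b _
    have hb : (⟨i + (b : ℕ), by have := hfin b; omega⟩ : Fin (n+1))
        = Fin.castSucc ⟨i + (b : ℕ), hfin b⟩ := rfl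
    have ha : (⟨i + (a : ℕ), by have := hfin a; omega⟩ : Fin (n+1))
        = Fin.castSucc ⟨i + (a : ℕ), hfin a⟩ := rfl
    rw [hb, ha, ins_castSucc, ins_castSucc, Fin.succAbove_lt_succAbove_iff]
  have hword : (fun b : Fin j =>
      (Fin.snoc w' c : Fin (n+1) → Fin k) ⟨i + (b : ℕ), by have := hfin b; omega⟩)
      = (fun b : Fin j => w' ⟨i + (b : ℕ), hfin b⟩) := by
    funext b
    have hb : (⟨i + (b : ℕ), by have := hfin b; omega⟩ : Fin (n+1))
        = Fin.castSucc ⟨i + (b : ℕ), hfin b⟩ := rfl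
    rw [hb, Fin.snoc_castSucc]
  constructor
  · intro hh
    obtain ⟨hle, τu, hτu, h1, h2⟩ := hh
    refine ⟨hij, τu, hτu, fun a => (hperm a).symm.trans (h1 a), fun a => ?_⟩
    exact (congrArg (fun u => redCount u a) hword).symm.trans (h2 a)
  · intro hh
    obtain ⟨hle, τu, hτu, h1, h2⟩ := hh
    refine ⟨by omega, τu, hτu, fun a => (hperm a).trans (h1 a), fun a => ?_⟩
    exact (congrArg (fun u => redCount u a) hword).trans (h2 a)

lemma noMatch_iff {n j k : ℕ} (hj : 1 ≤ j) (Υ : Set (Equiv.Perm (Fin j) × (Fin j → Fin k)))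
    (σ' : Equiv.Perm (Fin n)) (v : Fin (n+1)) (w' : Fin n → Fin k) (c : Fin k) :
    (∀ i : ℕ, ¬ biMatchAt j k Υ σ' w' i) ↔
      ((∀ i : ℕ, ¬ biMatchAt j k Υ (ins σ' v) (Fin.snoc w' c) i) ∨
        (biMatchAt j k Υ (ins σ' v) (Fin.snoc w' c) ((n+1) - j) ∧
          ∀ i : ℕ, biMatchAt j k Υ (ins σ' v) (Fin.snoc w' c) i → i = (n+1) - j)) := by
  have hM : ∀ i : ℕ, biMatchAt j k Υ (ins σ' v) (Fin.snoc w' c) i → i + j ≤ n + 1 := by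
    rintro i ⟨h, -⟩; exact h
  have hM' : ∀ i : ℕ, biMatchAt j k Υ σ' w' i → i + j ≤ n := by
    rintro i ⟨h, -⟩; exact h
  constructor
  · intro hA
    by_cases hB : biMatchAt j k Υ (ins σ' v) (Fin.snoc w' c) ((n+1) - j)
    · right
      refine ⟨hB, fun i hi => ?_⟩
      have h1 := hM i hi
      by_cases h2 : i + j ≤ n
      · exact absurd ((biMatchAt_ins Υ σ' v w' c i h2).mp hi) (hA i)
      · omega
    · left
      intro i hi
      have h1 := hM i hi
      by_cases h2 : i + j ≤ n
      · exact absurd ((biMatchAt_ins Υ σ' v w' c i h2).mp hi) (hA i)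
      · have : i = (n+1) - j := by omega
        exact hB (this ▸ hi)
  · rintro (hA | ⟨hB, hO⟩) i hi
    · have h2 := hM' i hi
      exact hA i ((biMatchAt_ins Υ σ' v w' c i h2).mpr hi)
    · have h2 := hM' i hi
      have h3 := hO i ((biMatchAt_ins Υ σ' v w' c i h2).mpr hi)
      omega

lemma ite_add_ite_or {P Q : Prop} (h : ¬ (P ∧ Q)) (x : K) :
    ((if P then x else 0) + (if Q then x else 0)) = if (P ∨ Q) then x else 0 := by
  split_ifs <;> first | tauto | simp

lemma sum_G (m : ℕ) : (∑ v : Fin (m+1), qv ^ (m - (v : ℕ)) * pv ^ (v : ℕ))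
    = pqInt pv qv (m+1) := by
  rw [Fin.sum_univ_eq_sum_range (fun i => qv ^ (m - i) * pv ^ i), pqInt]
  conv_lhs => rw [← Finset.sum_range_reflect]
  apply Finset.sum_congr rfl
  intro i hi
  rw [Finset.mem_range] at hi
  have h1 : m + 1 - 1 - i = m - i := by omega
  have h2 : m - (m - i) = i := by omega
  rw [h1, h2, mul_comm]

lemma A_zero (j k : ℕ) (hj : 1 ≤ j) (Υ : Set (Equiv.Perm (Fin j) × (Fin j → Fin k))) :
    AΥ j k Υ 0 = 1 := by
  have hcond : ∀ (σ : Equiv.Perm (Fin 0)) (w : Fin 0 → Fin k) (i : ℕ),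
      ¬ biMatchAt j k Υ σ w i := by
    rintro σ w i ⟨h, -⟩; omega
  have hinv : ∀ σ : Equiv.Perm (Fin 0), inv' σ = 0 := by
    intro σ; rw [inv']; simp
  have hcoinv : ∀ σ : Equiv.Perm (Fin 0), coinv' σ = 0 := by
    intro σ; rw [coinv']; simp
  have hws : ∀ w : Fin 0 → Fin k, wsum w = 0 := by
    intro w; rw [wsum]; simp
  have hs : ∀ (σ : Equiv.Perm (Fin 0)) (w : Fin 0 → Fin k),
      (if (∀ i : ℕ, ¬ biMatchAt j k Υ σ w i) then
        qv ^ inv' σ * pv ^ coinv' σ * rv ^ wsum w else 0) = 1 := by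
    intro σ w
    rw [if_pos (hcond σ w), hinv, hcoinv, hws]
    simp
  rw [AΥ]
  simp only [hs]
  simp

lemma pqInt_ne_zero (m : ℕ) (hm : 1 ≤ m) : pqInt pv qv m ≠ 0 := by
  have heq : pqInt pv qv m = algebraMap (MvPolynomial (Fin 4) ℚ) K
      (∑ i ∈ Finset.range m, (MvPolynomial.X 0) ^ (m - 1 - i) * (MvPolynomial.X 1) ^ i) := by
    rw [pqInt, map_sum]
    apply Finset.sum_congr rfl
    intro i _
    rw [map_mul, map_pow, map_pow, pv, qv]
  rw [heq]
  intro h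
  have hinj := IsFractionRing.injective (MvPolynomial (Fin 4) ℚ) K
  have h0 : (∑ i ∈ Finset.range m,
      (MvPolynomial.X (0 : Fin 4) : MvPolynomial (Fin 4) ℚ) ^ (m - 1 - i)
        * (MvPolynomial.X 1) ^ i) = 0 := hinj (by rw [map_zero]; exact h)
  have := congrArg (MvPolynomial.eval (fun i : Fin 4 => if i = 1 then (0 : ℚ) else 1)) h0
  simp [zero_pow_eq] at this
  omega

lemma pqFac_ne_zero (m : ℕ) : pqFac pv qv m ≠ 0 := by
  rw [pqFac, Finset.prod_ne_zero_iff]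
  intro i _
  exact pqInt_ne_zero (i + 1) (by omega)
lemma sum4 {A B C D : Type} [Fintype A] [Fintype B] [Fintype C] [Fintype D]
    (f : A → D → K) (g : B → K) (h : C → K) :
    ∑ a : A, ∑ b : B, ∑ c : C, ∑ d : D, f a d * g b * h c
      = (∑ c : C, h c) * (∑ b : B, g b) * (∑ a : A, ∑ d : D, f a d) := by
  simp only [Finset.mul_sum, Finset.sum_mul]
  apply Finset.sum_congr rfl; intro a _
  rw [show (∑ b : B, ∑ c : C, ∑ d : D, f a d * g b * h c)
      = ∑ b : B, ∑ d : D, ∑ c : C, f a d * g b * h c from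
    Finset.sum_congr rfl (fun b _ => Finset.sum_comm)]
  rw [Finset.sum_comm]
  apply Finset.sum_congr rfl; intro d _
  apply Finset.sum_congr rfl; intro b _
  apply Finset.sum_congr rfl; intro c _
  ring

theorem statement4 (k j : ℕ) (hk : 2 ≤ k) (hj : 1 ≤ j)
    (Υ : Set (Equiv.Perm (Fin j) × (Fin j → Fin k)))
    (hred : ∀ τu ∈ Υ, ∀ a : Fin j, (τu.2 a : ℕ) = redCount τu.2 a) :
    (∀ n : ℕ, 1 ≤ n →
      (∑ i ∈ Finset.range k, rv ^ i) * pqInt pv qv n * AΥ j k Υ (n - 1)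
        = AΥ j k Υ n + BΥ j k Υ n) ∧
    (PowerSeries.mk fun n => if n = 0 then 0 else BΥ j k Υ n / pqFac pv qv n)
      = (PowerSeries.C (R := K) (∑ i ∈ Finset.range k, rv ^ i) * PowerSeries.X - 1) *
          (PowerSeries.mk fun n => AΥ j k Υ n / pqFac pv qv n) + 1 := by
  have part1 : ∀ n : ℕ, 1 ≤ n →
      (∑ i ∈ Finset.range k, rv ^ i) * pqInt pv qv n * AΥ j k Υ (n - 1)
        = AΥ j k Υ n + BΥ j k Υ n := by
    intro n hn
    obtain ⟨m, rfl⟩ : ∃ m, n = m + 1 := ⟨n - 1, by omega⟩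
    simp only [Nat.add_sub_cancel]
    have hAB : AΥ j k Υ (m+1) + BΥ j k Υ (m+1)
        = ∑ σ : Equiv.Perm (Fin (m+1)), ∑ w : Fin (m+1) → Fin k,
            (if ((∀ i : ℕ, ¬ biMatchAt j k Υ σ w i) ∨
                (biMatchAt j k Υ σ w ((m+1) - j) ∧
                  ∀ i : ℕ, biMatchAt j k Υ σ w i → i = (m+1) - j)) then
              qv ^ inv' σ * pv ^ coinv' σ * rv ^ wsum w else 0) := by
      rw [AΥ, BΥ, ← Finset.sum_add_distrib]
      apply Finset.sum_congr rfl; intro σ _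
      rw [← Finset.sum_add_distrib]
      apply Finset.sum_congr rfl; intro w _
      have hdisj : ¬ ((∀ i : ℕ, ¬ biMatchAt j k Υ σ w i) ∧
          (biMatchAt j k Υ σ w ((m+1) - j) ∧
            ∀ i : ℕ, biMatchAt j k Υ σ w i → i = (m+1) - j)) := by
        rintro ⟨hA, hB, -⟩
        exact hA _ hB
      by_cases hP : (∀ i : ℕ, ¬ biMatchAt j k Υ σ w i)
      · rw [if_pos hP, if_pos (Or.inl hP), if_neg (fun hQ => hdisj ⟨hP, hQ⟩), add_zero]
      · by_cases hQ : (biMatchAt j k Υ σ w ((m+1) - j) ∧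
            ∀ i : ℕ, biMatchAt j k Υ σ w i → i = (m+1) - j)
        · rw [if_neg hP, if_pos hQ, if_pos (Or.inr hQ), zero_add]
        · rw [if_neg hP, if_neg hQ, if_neg (fun h => h.elim hP hQ), add_zero]
    have hσ : ∀ (G : Equiv.Perm (Fin (m+1)) → K),
        (∑ σ, G σ) = ∑ sv : Equiv.Perm (Fin m) × Fin (m+1), G (ins sv.1 sv.2) :=
      fun G => (Fintype.sum_bijective _ (ins_bijective m) _ G (fun _ => rfl)).symm
    have hw : ∀ (G : (Fin (m+1) → Fin k) → K),
        (∑ w, G w) = ∑ wc : Fin k × (Fin m → Fin k), G (Fin.snoc wc.2 wc.1) :=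
      fun G => (Fintype.sum_bijective _ (Fin.snocEquiv (fun _ => Fin k)).bijective _ G
        (fun _ => rfl)).symm
    rw [hAB, hσ, Fintype.sum_prod_type]
    have hstep : ∀ (σ' : Equiv.Perm (Fin m)) (v : Fin (m+1)),
        (∑ w : Fin (m+1) → Fin k,
          (if ((∀ i : ℕ, ¬ biMatchAt j k Υ (ins σ' v) w i) ∨
              (biMatchAt j k Υ (ins σ' v) w ((m+1) - j) ∧
                ∀ i : ℕ, biMatchAt j k Υ (ins σ' v) w i → i = (m+1) - j)) then
            qv ^ inv' (ins σ' v) * pv ^ coinv' (ins σ' v) * rv ^ wsum w else 0))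
        = ∑ c : Fin k, ∑ w' : Fin m → Fin k,
            (if (∀ i : ℕ, ¬ biMatchAt j k Υ σ' w' i) then
              qv ^ inv' σ' * pv ^ coinv' σ' * rv ^ wsum w' else 0)
              * (qv ^ (m - (v : ℕ)) * pv ^ (v : ℕ)) * rv ^ (c : ℕ) := by
      intro σ' v
      rw [hw, Fintype.sum_prod_type]
      apply Finset.sum_congr rfl; intro c _
      apply Finset.sum_congr rfl; intro w' _
      rw [if_congr (noMatch_iff hj Υ σ' v w' c).symm rfl rfl]
      rw [inv'_ins, coinv'_ins, wsum_snoc]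
      split_ifs with h
      · rw [pow_add, pow_add, pow_add]; ring
      · ring
    rw [Finset.sum_congr rfl (fun σ' _ => Finset.sum_congr rfl (fun v _ => hstep σ' v))]
    rw [sum4 (fun σ' w' => if (∀ i : ℕ, ¬ biMatchAt j k Υ σ' w' i) then
          qv ^ inv' σ' * pv ^ coinv' σ' * rv ^ wsum w' else 0)
        (fun v : Fin (m+1) => qv ^ (m - (v : ℕ)) * pv ^ (v : ℕ))
        (fun c : Fin k => rv ^ (c : ℕ))]
    rw [sum_G m, Fin.sum_univ_eq_sum_range (fun i => rv ^ i) k, ← AΥ]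
  refine ⟨part1, ?_⟩
  apply PowerSeries.ext
  intro n
  rw [PowerSeries.coeff_mk]
  have hrw : (PowerSeries.C (R := K) (∑ i ∈ Finset.range k, rv ^ i) * PowerSeries.X - 1) *
        (PowerSeries.mk fun n => AΥ j k Υ n / pqFac pv qv n) + 1
      = PowerSeries.C (R := K) (∑ i ∈ Finset.range k, rv ^ i) *
          ((PowerSeries.mk fun n => AΥ j k Υ n / pqFac pv qv n) * PowerSeries.X)
        - (PowerSeries.mk fun n => AΥ j k Υ n / pqFac pv qv n) + 1 := by ring
  rw [hrw, map_add, map_sub, PowerSeries.coeff_C_mul, PowerSeries.coeff_one,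
    PowerSeries.coeff_mk]
  cases n with
  | zero =>
    rw [PowerSeries.coeff_zero_mul_X, A_zero j k hj Υ]
    rw [show pqFac pv qv 0 = 1 from Finset.prod_range_zero _]
    simp
  | succ m =>
    rw [PowerSeries.coeff_succ_mul_X, PowerSeries.coeff_mk]
    have hp1 := part1 (m+1) (by omega)
    simp only [Nat.add_sub_cancel] at hp1
    have hfac : pqFac pv qv (m+1) = pqFac pv qv m * pqInt pv qv (m+1) := by
      rw [pqFac, Finset.prod_range_succ, ← pqFac]
    have h1 : pqFac pv qv m ≠ 0 := pqFac_ne_zero m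
    have h2 : pqInt pv qv (m+1) ≠ 0 := pqInt_ne_zero _ (by omega)
    have hB : BΥ j k Υ (m+1) = (∑ i ∈ Finset.range k, rv ^ i) * pqInt pv qv (m+1) *
        AΥ j k Υ m - AΥ j k Υ (m+1) := by linear_combination -hp1
    rw [if_neg (by omega : ¬ m + 1 = 0), hB, hfac]
    field_simp
    rw [if_neg (by omega : ¬ m + 1 = 0)]
    ring
end
end

section
/- Fix integers k ≥ 2 and j ≥ 1, and a set Υ ⊆ C_k≀S_j such that red(u) = u for every (τ,u) ∈ Υ. Let N(t) = Σ_{n≥0} t^n/[n]_{p,q}! Σ_{(σ,w) ∈ C_k≀S_n} q^{inv(σ)} p^{coinv(σ)} r^{||w||} x^{Υ-nlap(σ,w)} and A(t) = Σ_{n≥0} t^n/[n]_{p,q}! Σ q^{inv(σ)} p^{coinv(σ)} r^{||w||}, the latter sum over all (σ,w) ∈ C_k≀S_n having no Υ-bi-match. Then, as formal power series in t, N(t) = A(t)/(1 − x(1 + ([k]_r t − 1)A(t))). -/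
open Finset
open scoped Classical

noncomputable section

/-- `Υ-nlap (σ,w)`: the maximum number of pairwise non-overlapping `Υ`-bi-matches in
`(σ,w)`, i.e. the maximum cardinality of a set of starting positions of `Υ`-bi-matches
any two distinct members of which differ by at least `j`. -/
def nlap {n : ℕ} (j k : ℕ) (Υ : Set (Equiv.Perm (Fin j) × (Fin j → Fin k)))
    (σ : Equiv.Perm (Fin n)) (w : Fin n → Fin k) : ℕ :=
  sSup {m : ℕ | ∃ S : Finset ℕ, S.card = m ∧ (∀ i ∈ S, biMatchAt j k Υ σ w i) ∧
    ∀ i ∈ S, ∀ i' ∈ S, i < i' → i + j ≤ i'}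


namespace S5


variable {l m : ℕ}

/-- order embedding of `Fin l` into a subset `X` of card `l`. -/
def eX {n : ℕ} (X : Finset (Fin n)) {l : ℕ} (hX : X.card = l) : Fin l → Fin n :=
  fun a => ↑(X.orderIsoOfFin hX a)

lemma eX_lt_iff {n : ℕ} (X : Finset (Fin n)) {l : ℕ} (hX : X.card = l) {a b : Fin l} :
    eX X hX a < eX X hX b ↔ a < b := by
  simp [eX, ← Subtype.coe_lt_coe]

lemma eX_mem {n : ℕ} (X : Finset (Fin n)) {l : ℕ} (hX : X.card = l) (a : Fin l) :
    eX X hX a ∈ X := (X.orderIsoOfFin hX a).2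

lemma eX_inj {n : ℕ} (X : Finset (Fin n)) {l : ℕ} (hX : X.card = l) :
    Function.Injective (eX X hX) := by
  intro a b h
  have := (X.orderIsoOfFin hX).injective (Subtype.ext h)
  exact this

lemma card_compl_eq (X : Finset (Fin (l + m))) (hX : X.card = l) : Xᶜ.card = m := by
  simp [Finset.card_compl, hX]

/-- the equiv `Fin l ⊕ Fin m ≃ Fin (l+m)` induced by a subset `X` of card `l`. -/
def splitEquiv (X : Finset (Fin (l + m))) (hX : X.card = l) : Fin l ⊕ Fin m ≃ Fin (l + m) :=
  Equiv.ofBijective (Sum.elim (eX X hX) (eX Xᶜ (card_compl_eq X hX)))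
  (by
    rw [Fintype.bijective_iff_injective_and_card]
    constructor
    · intro s t h
      cases s with
      | inl a => cases t with
        | inl b => simp only [Sum.elim_inl] at h; exact congrArg Sum.inl (eX_inj _ _ h)
        | inr b =>
          exfalso
          simp only [Sum.elim_inl, Sum.elim_inr] at h
          have h1 := eX_mem X hX a
          have h2 := eX_mem Xᶜ (card_compl_eq X hX) b
          rw [h] at h1
          simp [Finset.mem_compl] at h2
          exact h2 h1
      | inr a => cases t with
        | inl b =>
          exfalso
          simp only [Sum.elim_inl, Sum.elim_inr] at h
          have h1 := eX_mem X hX b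
          have h2 := eX_mem Xᶜ (card_compl_eq X hX) a
          rw [← h] at h1
          simp [Finset.mem_compl] at h2
          exact h2 h1
        | inr b => simp only [Sum.elim_inr] at h; exact congrArg Sum.inr (eX_inj _ _ h)
    · simp)

@[simp] lemma splitEquiv_inl (X : Finset (Fin (l + m))) (hX : X.card = l) (a : Fin l) :
    splitEquiv X hX (Sum.inl a) = eX X hX a := rfl

@[simp] lemma splitEquiv_inr (X : Finset (Fin (l + m))) (hX : X.card = l) (b : Fin m) :
    splitEquiv X hX (Sum.inr b) = eX Xᶜ (card_compl_eq X hX) b := rfl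

/-- the permutation of `Fin (l+m)` built from `X, α, β`. -/
def splitPerm (X : Finset (Fin (l + m))) (hX : X.card = l)
    (α : Equiv.Perm (Fin l)) (β : Equiv.Perm (Fin m)) : Equiv.Perm (Fin (l + m)) :=
  finSumFinEquiv.symm.trans ((Equiv.sumCongr α β).trans (splitEquiv X hX))

@[simp] lemma splitPerm_castAdd (X : Finset (Fin (l + m))) (hX : X.card = l)
    (α : Equiv.Perm (Fin l)) (β : Equiv.Perm (Fin m)) (a : Fin l) :
    splitPerm X hX α β (Fin.castAdd m a) = eX X hX (α a) := by
  simp [splitPerm, Equiv.trans_apply]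

@[simp] lemma splitPerm_natAdd (X : Finset (Fin (l + m))) (hX : X.card = l)
    (α : Equiv.Perm (Fin l)) (β : Equiv.Perm (Fin m)) (b : Fin m) :
    splitPerm X hX α β (Fin.natAdd l b) = eX Xᶜ (card_compl_eq X hX) (β b) := by
  simp [splitPerm, Equiv.trans_apply]


def splitFun (l m : ℕ) :
    (Σ _X : {X : Finset (Fin (l + m)) // X.card = l},
      Equiv.Perm (Fin l) × Equiv.Perm (Fin m)) → Equiv.Perm (Fin (l + m)) :=
  fun t => splitPerm t.1.1 t.1.2 t.2.1 t.2.2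

lemma splitPerm_image (X : Finset (Fin (l + m))) (hX : X.card = l)
    (α : Equiv.Perm (Fin l)) (β : Equiv.Perm (Fin m)) (v : Fin (l + m)) :
    v ∈ X ↔ ∃ a : Fin l, splitPerm X hX α β (Fin.castAdd m a) = v := by
  constructor
  · intro hv
    refine ⟨α.symm ((X.orderIsoOfFin hX).symm ⟨v, hv⟩), ?_⟩
    simp [eX]
  · rintro ⟨a, rfl⟩
    simp [eX_mem]

lemma splitFun_injective (l m : ℕ) : Function.Injective (splitFun l m) := by
  rintro ⟨⟨X, hX⟩, α, β⟩ ⟨⟨X', hX'⟩, α', β'⟩ h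
  simp only [splitFun] at h
  have hXX : X = X' := by
    ext v
    rw [splitPerm_image X hX α β v, splitPerm_image X' hX' α' β' v, h]
  subst hXX
  have hα : α = α' := by
    ext a
    have := congrFun (congrArg (fun (e : Equiv.Perm (Fin (l+m))) => (e : Fin (l+m) → Fin (l+m))) h) (Fin.castAdd m a)
    simp only [splitPerm_castAdd] at this
    exact congrArg Fin.val (eX_inj X hX this)
  have hβ : β = β' := by
    ext b
    have := congrFun (congrArg (fun (e : Equiv.Perm (Fin (l+m))) => (e : Fin (l+m) → Fin (l+m))) h) (Fin.natAdd l b)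
    simp only [splitPerm_natAdd] at this
    exact congrArg Fin.val (eX_inj Xᶜ (card_compl_eq X hX) this)
  simp [hα, hβ]

lemma splitFun_bijective (l m : ℕ) : Function.Bijective (splitFun l m) := by
  rw [Fintype.bijective_iff_injective_and_card]
  refine ⟨splitFun_injective l m, ?_⟩
  rw [Fintype.card_sigma]
  simp only [Fintype.card_prod, Fintype.card_perm, Finset.sum_const, smul_eq_mul]
  have h1 : Fintype.card {X : Finset (Fin (l + m)) // X.card = l} = (l + m).choose l := by
    rw [Fintype.card_subtype]
    simpa using (Fintype.card_finset_len (α := Fin (l+m)) l)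
  rw [Finset.card_univ, h1]
  simp only [Fintype.card_fin]
  have := Nat.choose_mul_factorial_mul_factorial (Nat.le_add_right l m)
  rw [add_tsub_cancel_left] at this
  rw [← mul_assoc]
  exact this

/-- Splitting a sum over permutations of `Fin (l+m)`. -/
lemma sum_perm_split {M : Type*} [AddCommMonoid M] (F : Equiv.Perm (Fin (l + m)) → M) :
    ∑ σ : Equiv.Perm (Fin (l + m)), F σ
      = ∑ X : {X : Finset (Fin (l + m)) // X.card = l}, ∑ α : Equiv.Perm (Fin l),
          ∑ β : Equiv.Perm (Fin m), F (splitPerm X.1 X.2 α β) := by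
  rw [← Equiv.sum_comp (Equiv.ofBijective _ (splitFun_bijective l m)) F]
  rw [← Finset.univ_sigma_univ, Finset.sum_sigma]
  refine Finset.sum_congr rfl fun X _ => ?_
  rw [Fintype.sum_prod_type]
  rfl

end S5

namespace S5
variable {l m : ℕ}

/-- cross inversions of a subset -/
def invX {n : ℕ} (X : Finset (Fin n)) : ℕ :=
  ((Finset.univ : Finset (Fin n × Fin n)).filter
    (fun p => p.1 ∈ X ∧ p.2 ∉ X ∧ p.2 < p.1)).card

def coinvX {n : ℕ} (X : Finset (Fin n)) : ℕ :=
  ((Finset.univ : Finset (Fin n × Fin n)).filter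
    (fun p => p.1 ∈ X ∧ p.2 ∉ X ∧ p.1 < p.2)).card

lemma eXc_not_mem (X : Finset (Fin (l + m))) (hX : X.card = l) (b : Fin m) :
    eX Xᶜ (card_compl_eq X hX) b ∉ X := by
  have := eX_mem Xᶜ (card_compl_eq X hX) b
  simpa [Finset.mem_compl] using this

lemma invX_eq (X : Finset (Fin (l + m))) (hX : X.card = l) :
    invX X = ∑ a : Fin l, ∑ b : Fin m,
      (if eX Xᶜ (card_compl_eq X hX) b < eX X hX a then 1 else 0) := by
  rw [invX, Finset.card_filter, Fintype.sum_prod_type]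
  rw [← Equiv.sum_comp (splitEquiv X hX)
    (fun u => ∑ v : Fin (l+m), if u ∈ X ∧ v ∉ X ∧ v < u then (1:ℕ) else 0)]
  rw [Fintype.sum_sum_type]
  have h2 : ∀ b : Fin m, ∑ v : Fin (l+m),
      (if (splitEquiv X hX (Sum.inr b)) ∈ X ∧ v ∉ X ∧ v < (splitEquiv X hX (Sum.inr b))
        then (1:ℕ) else 0) = 0 := by
    intro b
    refine Finset.sum_eq_zero fun t _ => ?_
    simp [eXc_not_mem X hX]
  rw [Finset.sum_congr rfl (fun b _ => h2 b), Finset.sum_const_zero, add_zero]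
  refine Finset.sum_congr rfl fun a _ => ?_
  rw [← Equiv.sum_comp (splitEquiv X hX)
    (fun v => if (splitEquiv X hX (Sum.inl a)) ∈ X ∧ v ∉ X ∧ v < (splitEquiv X hX (Sum.inl a))
      then (1:ℕ) else 0)]
  rw [Fintype.sum_sum_type]
  have h3 : ∀ b : Fin l, (if (splitEquiv X hX (Sum.inl a)) ∈ X ∧ (splitEquiv X hX (Sum.inl b)) ∉ X ∧
        (splitEquiv X hX (Sum.inl b)) < (splitEquiv X hX (Sum.inl a)) then (1:ℕ) else 0) = 0 := by
    intro b; simp [eX_mem]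
  rw [Finset.sum_congr rfl (fun b _ => h3 b), Finset.sum_const_zero, zero_add]
  refine Finset.sum_congr rfl fun b _ => ?_
  simp [eX_mem, eXc_not_mem X hX]


lemma coinvX_eq (X : Finset (Fin (l + m))) (hX : X.card = l) :
    coinvX X = ∑ a : Fin l, ∑ b : Fin m,
      (if eX X hX a < eX Xᶜ (card_compl_eq X hX) b then 1 else 0) := by
  rw [coinvX, Finset.card_filter, Fintype.sum_prod_type]
  rw [← Equiv.sum_comp (splitEquiv X hX)
    (fun u => ∑ v : Fin (l+m), if u ∈ X ∧ v ∉ X ∧ u < v then (1:ℕ) else 0)]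
  rw [Fintype.sum_sum_type]
  have h2 : ∀ b : Fin m, ∑ v : Fin (l+m),
      (if (splitEquiv X hX (Sum.inr b)) ∈ X ∧ v ∉ X ∧ (splitEquiv X hX (Sum.inr b)) < v
        then (1:ℕ) else 0) = 0 := by
    intro b
    refine Finset.sum_eq_zero fun t _ => ?_
    simp [eXc_not_mem X hX]
  rw [Finset.sum_congr rfl (fun b _ => h2 b), Finset.sum_const_zero, add_zero]
  refine Finset.sum_congr rfl fun a _ => ?_
  rw [← Equiv.sum_comp (splitEquiv X hX)
    (fun v => if (splitEquiv X hX (Sum.inl a)) ∈ X ∧ v ∉ X ∧ (splitEquiv X hX (Sum.inl a)) < v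
      then (1:ℕ) else 0)]
  rw [Fintype.sum_sum_type]
  have h3 : ∀ b : Fin l, (if (splitEquiv X hX (Sum.inl a)) ∈ X ∧ (splitEquiv X hX (Sum.inl b)) ∉ X ∧
        (splitEquiv X hX (Sum.inl a)) < (splitEquiv X hX (Sum.inl b)) then (1:ℕ) else 0) = 0 := by
    intro b; simp [eX_mem]
  rw [Finset.sum_congr rfl (fun b _ => h3 b), Finset.sum_const_zero, zero_add]
  refine Finset.sum_congr rfl fun b _ => ?_
  simp [eX_mem, eXc_not_mem X hX]

lemma castAdd_lt_castAdd {a a' : Fin l} : Fin.castAdd m a < Fin.castAdd m a' ↔ a < a' := by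
  rw [Fin.lt_def, Fin.lt_def, Fin.coe_castAdd, Fin.coe_castAdd]

lemma castAdd_lt_natAdd (a : Fin l) (b : Fin m) : Fin.castAdd m a < Fin.natAdd l b := by
  rw [Fin.lt_def, Fin.coe_castAdd, Fin.coe_natAdd]; omega

lemma not_natAdd_lt_castAdd (a : Fin l) (b : Fin m) : ¬ (Fin.natAdd l b < Fin.castAdd m a) := by
  rw [Fin.lt_def, Fin.coe_castAdd, Fin.coe_natAdd]; omega

lemma natAdd_lt_natAdd {b b' : Fin m} : Fin.natAdd l b < Fin.natAdd l b' ↔ b < b' := by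
  rw [Fin.lt_def, Fin.lt_def, Fin.coe_natAdd, Fin.coe_natAdd]; omega

set_option maxRecDepth 10000 in
lemma pairsum_split (X : Finset (Fin (l + m))) (hX : X.card = l)
    (α : Equiv.Perm (Fin l)) (β : Equiv.Perm (Fin m)) (P : Fin (l+m) → Fin (l+m) → Prop)
    [DecidableRel P] :
    (∑ i : Fin (l+m), ∑ i' : Fin (l+m),
      if i < i' ∧ P (splitPerm X hX α β i') (splitPerm X hX α β i) then (1:ℕ) else 0)
    = (∑ a : Fin l, ∑ a' : Fin l,
        if a < a' ∧ P (eX X hX (α a')) (eX X hX (α a)) then 1 else 0)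
      + (∑ b : Fin m, ∑ b' : Fin m,
        if b < b' ∧ P (eX Xᶜ (card_compl_eq X hX) (β b')) (eX Xᶜ (card_compl_eq X hX) (β b))
          then 1 else 0)
      + (∑ a : Fin l, ∑ b : Fin m,
        if P (eX Xᶜ (card_compl_eq X hX) b) (eX X hX a) then 1 else 0) := by
  classical
  have inner : ∀ i : Fin (l+m), (∑ i' : Fin (l+m),
      if i < i' ∧ P (splitPerm X hX α β i') (splitPerm X hX α β i) then (1:ℕ) else 0)
      = (∑ a' : Fin l, if i < Fin.castAdd m a' ∧ P (eX X hX (α a')) (splitPerm X hX α β i)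
          then 1 else 0)
        + (∑ b' : Fin m, if i < Fin.natAdd l b' ∧
            P (eX Xᶜ (card_compl_eq X hX) (β b')) (splitPerm X hX α β i) then 1 else 0) := by
    intro i
    rw [← Equiv.sum_comp (finSumFinEquiv (m := l) (n := m))
      (fun i' => if i < i' ∧ P (splitPerm X hX α β i') (splitPerm X hX α β i) then (1:ℕ) else 0)]
    rw [Fintype.sum_sum_type]
    simp only [finSumFinEquiv_apply_left, finSumFinEquiv_apply_right,
      splitPerm_castAdd, splitPerm_natAdd]
  rw [← Equiv.sum_comp (finSumFinEquiv (m := l) (n := m))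
    (fun i => ∑ i' : Fin (l+m),
      if i < i' ∧ P (splitPerm X hX α β i') (splitPerm X hX α β i) then (1:ℕ) else 0)]
  rw [Fintype.sum_sum_type]
  rw [Finset.sum_congr rfl (fun a (_ : a ∈ Finset.univ) => inner (finSumFinEquiv (Sum.inl a))),
      Finset.sum_congr rfl (fun b (_ : b ∈ Finset.univ) => inner (finSumFinEquiv (Sum.inr b)))]
  simp only [finSumFinEquiv_apply_left, finSumFinEquiv_apply_right,
    splitPerm_castAdd, splitPerm_natAdd]
  simp only [castAdd_lt_castAdd, natAdd_lt_natAdd, castAdd_lt_natAdd, true_and]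
  have e3 : ∀ b : Fin m, (∑ a' : Fin l, if Fin.natAdd l b < Fin.castAdd m a' ∧
      P (eX X hX (α a')) (eX Xᶜ (card_compl_eq X hX) (β b)) then (1:ℕ) else 0) = 0 := by
    intro b
    refine Finset.sum_eq_zero fun a' _ => ?_
    simp only [not_natAdd_lt_castAdd, false_and, if_false]
  rw [Finset.sum_add_distrib, Finset.sum_add_distrib,
      Finset.sum_congr rfl (fun b (_ : b ∈ Finset.univ) => e3 b), Finset.sum_const_zero, zero_add]
  have r1 : (∑ a : Fin l, ∑ b' : Fin m,
      if P (eX Xᶜ (card_compl_eq X hX) (β b')) (eX X hX (α a)) then (1:ℕ) else 0)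
      = ∑ a : Fin l, ∑ b : Fin m,
      if P (eX Xᶜ (card_compl_eq X hX) b) (eX X hX a) then 1 else 0 := by
    rw [← Equiv.sum_comp α (fun a => ∑ b : Fin m,
      if P (eX Xᶜ (card_compl_eq X hX) b) (eX X hX a) then (1:ℕ) else 0)]
    refine Finset.sum_congr rfl fun a _ => ?_
    rw [← Equiv.sum_comp β (fun b =>
      if P (eX Xᶜ (card_compl_eq X hX) b) (eX X hX (α a)) then (1:ℕ) else 0)]
  have r2 : (∑ a : Fin l, ∑ a' : Fin l,
      if a < a' ∧ P (eX X hX (α a')) (eX X hX (α a)) then (1:ℕ) else 0)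
      + (∑ a : Fin l, ∑ b' : Fin m,
      if P (eX Xᶜ (card_compl_eq X hX) (β b')) (eX X hX (α a)) then (1:ℕ) else 0)
      + (∑ b : Fin m, ∑ b' : Fin m,
      if b < b' ∧ P (eX Xᶜ (card_compl_eq X hX) (β b')) (eX Xᶜ (card_compl_eq X hX) (β b))
        then (1:ℕ) else 0)
      = (∑ a : Fin l, ∑ a' : Fin l,
        if a < a' ∧ P (eX X hX (α a')) (eX X hX (α a)) then 1 else 0)
      + (∑ b : Fin m, ∑ b' : Fin m,
        if b < b' ∧ P (eX Xᶜ (card_compl_eq X hX) (β b')) (eX Xᶜ (card_compl_eq X hX) (β b))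
          then 1 else 0)
      + (∑ a : Fin l, ∑ b : Fin m,
        if P (eX Xᶜ (card_compl_eq X hX) b) (eX X hX a) then 1 else 0) := by
    rw [r1]; ring
  rw [← r2]


lemma inv'_splitPerm (X : Finset (Fin (l + m))) (hX : X.card = l)
    (α : Equiv.Perm (Fin l)) (β : Equiv.Perm (Fin m)) :
    inv' (splitPerm X hX α β) = invX X + inv' α + inv' β := by
  have key := pairsum_split X hX α β (fun u v => u < v)
  beta_reduce at key
  rw [inv', Finset.card_filter, Fintype.sum_prod_type]
  dsimp only
  rw [key]
  have hα : (∑ a : Fin l, ∑ a' : Fin l,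
      if a < a' ∧ eX X hX (α a') < eX X hX (α a) then (1:ℕ) else 0) = inv' α := by
    rw [inv', Finset.card_filter, Fintype.sum_prod_type]
    refine Finset.sum_congr rfl fun a _ => Finset.sum_congr rfl fun a' _ => ?_
    simp only [eX_lt_iff]
  have hβ : (∑ b : Fin m, ∑ b' : Fin m,
      if b < b' ∧ eX Xᶜ (card_compl_eq X hX) (β b') < eX Xᶜ (card_compl_eq X hX) (β b)
        then (1:ℕ) else 0) = inv' β := by
    rw [inv', Finset.card_filter, Fintype.sum_prod_type]
    refine Finset.sum_congr rfl fun b _ => Finset.sum_congr rfl fun b' _ => ?_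
    simp only [eX_lt_iff]
  rw [hα, hβ, ← invX_eq X hX]
  ring

lemma coinv'_splitPerm (X : Finset (Fin (l + m))) (hX : X.card = l)
    (α : Equiv.Perm (Fin l)) (β : Equiv.Perm (Fin m)) :
    coinv' (splitPerm X hX α β) = coinvX X + coinv' α + coinv' β := by
  have key := pairsum_split X hX α β (fun u v => v < u)
  beta_reduce at key
  rw [coinv', Finset.card_filter, Fintype.sum_prod_type]
  dsimp only
  rw [key]
  have hα : (∑ a : Fin l, ∑ a' : Fin l,
      if a < a' ∧ eX X hX (α a) < eX X hX (α a') then (1:ℕ) else 0) = coinv' α := by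
    rw [coinv', Finset.card_filter, Fintype.sum_prod_type]
    refine Finset.sum_congr rfl fun a _ => Finset.sum_congr rfl fun a' _ => ?_
    simp only [eX_lt_iff]
  have hβ : (∑ b : Fin m, ∑ b' : Fin m,
      if b < b' ∧ eX Xᶜ (card_compl_eq X hX) (β b) < eX Xᶜ (card_compl_eq X hX) (β b')
        then (1:ℕ) else 0) = coinv' β := by
    rw [coinv', Finset.card_filter, Fintype.sum_prod_type]
    refine Finset.sum_congr rfl fun b _ => Finset.sum_congr rfl fun b' _ => ?_
    simp only [eX_lt_iff]
  rw [hα, hβ, ← coinvX_eq X hX]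
  ring

/-- joining two words -/
def joinWord {k : ℕ} (w1 : Fin l → Fin k) (w2 : Fin m → Fin k) : Fin (l + m) → Fin k :=
  fun i => Sum.elim w1 w2 (finSumFinEquiv.symm i)

@[simp] lemma joinWord_castAdd {k : ℕ} (w1 : Fin l → Fin k) (w2 : Fin m → Fin k) (a : Fin l) :
    joinWord w1 w2 (Fin.castAdd m a) = w1 a := by
  simp [joinWord]

@[simp] lemma joinWord_natAdd {k : ℕ} (w1 : Fin l → Fin k) (w2 : Fin m → Fin k) (b : Fin m) :
    joinWord w1 w2 (Fin.natAdd l b) = w2 b := by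
  simp [joinWord]

lemma wsum_joinWord {k : ℕ} (w1 : Fin l → Fin k) (w2 : Fin m → Fin k) :
    wsum (joinWord w1 w2) = wsum w1 + wsum w2 := by
  rw [wsum, ← Equiv.sum_comp (finSumFinEquiv (m := l) (n := m))
    (fun i => ((joinWord w1 w2 i : ℕ)))]
  rw [Fintype.sum_sum_type]
  simp only [finSumFinEquiv_apply_left, finSumFinEquiv_apply_right, joinWord_castAdd,
    joinWord_natAdd]
  rfl

lemma joinWord_bijective (l m k : ℕ) :
    Function.Bijective (fun t : (Fin l → Fin k) × (Fin m → Fin k) => joinWord t.1 t.2) := by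
  rw [Fintype.bijective_iff_injective_and_card]
  constructor
  · rintro ⟨w1, w2⟩ ⟨w1', w2'⟩ h
    simp only [Prod.mk.injEq]
    constructor
    · funext a
      have := congrFun h (Fin.castAdd m a)
      simpa using this
    · funext b
      have := congrFun h (Fin.natAdd l b)
      simpa using this
  · simp [pow_add]

lemma sum_word_split {M : Type*} [AddCommMonoid M] {k : ℕ} (G : (Fin (l + m) → Fin k) → M) :
    ∑ w : Fin (l + m) → Fin k, G w
      = ∑ w1 : Fin l → Fin k, ∑ w2 : Fin m → Fin k, G (joinWord w1 w2) := by
  rw [← Equiv.sum_comp (Equiv.ofBijective _ (joinWord_bijective l m k)) G]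
  rw [Fintype.sum_prod_type]
  rfl

/-- mk-indexed value lemmas -/
lemma splitPerm_mk_left (X : Finset (Fin (l + m))) (hX : X.card = l)
    (α : Equiv.Perm (Fin l)) (β : Equiv.Perm (Fin m)) {c : ℕ} (hc : c < l) (hc2 : c < l + m) :
    splitPerm X hX α β ⟨c, hc2⟩ = eX X hX (α ⟨c, hc⟩) := by
  have : (⟨c, hc2⟩ : Fin (l + m)) = Fin.castAdd m ⟨c, hc⟩ := rfl
  rw [this, splitPerm_castAdd]

lemma splitPerm_mk_right (X : Finset (Fin (l + m))) (hX : X.card = l)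
    (α : Equiv.Perm (Fin l)) (β : Equiv.Perm (Fin m)) {d : ℕ} (hd : d < m) (hd2 : l + d < l + m) :
    splitPerm X hX α β ⟨l + d, hd2⟩ = eX Xᶜ (card_compl_eq X hX) (β ⟨d, hd⟩) := by
  have : (⟨l + d, hd2⟩ : Fin (l + m)) = Fin.natAdd l ⟨d, hd⟩ := rfl
  rw [this, splitPerm_natAdd]

lemma joinWord_mk_left {k : ℕ} (w1 : Fin l → Fin k) (w2 : Fin m → Fin k)
    {c : ℕ} (hc : c < l) (hc2 : c < l + m) :
    joinWord w1 w2 ⟨c, hc2⟩ = w1 ⟨c, hc⟩ := by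
  have : (⟨c, hc2⟩ : Fin (l + m)) = Fin.castAdd m ⟨c, hc⟩ := rfl
  rw [this, joinWord_castAdd]

lemma joinWord_mk_right {k : ℕ} (w1 : Fin l → Fin k) (w2 : Fin m → Fin k)
    {d : ℕ} (hd : d < m) (hd2 : l + d < l + m) :
    joinWord w1 w2 ⟨l + d, hd2⟩ = w2 ⟨d, hd⟩ := by
  have : (⟨l + d, hd2⟩ : Fin (l + m)) = Fin.natAdd l ⟨d, hd⟩ := rfl
  rw [this, joinWord_natAdd]


lemma splitPerm_mk_right' (X : Finset (Fin (l + m))) (hX : X.card = l)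
    (α : Equiv.Perm (Fin l)) (β : Equiv.Perm (Fin m)) {c d : ℕ} (hd : d < m) (hc2 : c < l + m)
    (hcd : c = l + d) :
    splitPerm X hX α β ⟨c, hc2⟩ = eX Xᶜ (card_compl_eq X hX) (β ⟨d, hd⟩) := by
  subst hcd
  exact splitPerm_mk_right X hX α β hd hc2

lemma joinWord_mk_right' {k : ℕ} (w1 : Fin l → Fin k) (w2 : Fin m → Fin k)
    {c d : ℕ} (hd : d < m) (hc2 : c < l + m) (hcd : c = l + d) :
    joinWord w1 w2 ⟨c, hc2⟩ = w2 ⟨d, hd⟩ := by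
  subst hcd
  exact joinWord_mk_right w1 w2 hd hc2

variable {j kk : ℕ} (Υ : Set (Equiv.Perm (Fin j) × (Fin j → Fin kk)))

lemma biMatchAt_prefix (X : Finset (Fin (l + m))) (hX : X.card = l)
    (α : Equiv.Perm (Fin l)) (β : Equiv.Perm (Fin m))
    (w1 : Fin l → Fin kk) (w2 : Fin m → Fin kk) {i : ℕ} (hij : i + j ≤ l) :
    biMatchAt j kk Υ (splitPerm X hX α β) (joinWord w1 w2) i ↔ biMatchAt j kk Υ α w1 i := by
  have hword : ∀ pf : ∀ b : Fin j, i + (b : ℕ) < l + m, ∀ pf' : ∀ b : Fin j, i + (b : ℕ) < l,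
      (fun b : Fin j => joinWord w1 w2 ⟨i + (b : ℕ), pf b⟩)
        = (fun b : Fin j => w1 ⟨i + (b : ℕ), pf' b⟩) := by
    intro pf pf'
    funext b
    exact joinWord_mk_left w1 w2 (pf' b) (pf b)
  have hperm : ∀ a b : Fin j, ∀ pfa : i + (a : ℕ) < l + m, ∀ pfb : i + (b : ℕ) < l + m,
      ∀ pfa' : i + (a : ℕ) < l, ∀ pfb' : i + (b : ℕ) < l,
      (splitPerm X hX α β ⟨i + (b : ℕ), pfb⟩ < splitPerm X hX α β ⟨i + (a : ℕ), pfa⟩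
        ↔ α ⟨i + (b : ℕ), pfb'⟩ < α ⟨i + (a : ℕ), pfa'⟩) := by
    intro a b pfa pfb pfa' pfb'
    rw [splitPerm_mk_left X hX α β pfb' pfb, splitPerm_mk_left X hX α β pfa' pfa, eX_lt_iff]
  constructor
  · rintro ⟨h, τu, hτu, h1, h2⟩
    refine ⟨hij, τu, hτu, fun a => ?_, fun a => ?_⟩
    · rw [← h1 a]
      congr 1
      refine Finset.filter_congr fun b _ => ?_
      rw [hperm a b (by have := a.isLt; omega) (by have := b.isLt; omega)
        (by have := a.isLt; omega) (by have := b.isLt; omega)]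
    · rw [← h2 a]
      congr 1
      exact (hword _ _).symm
  · rintro ⟨h, τu, hτu, h1, h2⟩
    refine ⟨by omega, τu, hτu, fun a => ?_, fun a => ?_⟩
    · rw [← h1 a]
      congr 1
      refine Finset.filter_congr fun b _ => ?_
      rw [hperm a b (by have := a.isLt; omega) (by have := b.isLt; omega)
        (by have := a.isLt; omega) (by have := b.isLt; omega)]
    · rw [← h2 a]
      congr 1
      exact hword _ _

lemma biMatchAt_suffix (X : Finset (Fin (l + m))) (hX : X.card = l)
    (α : Equiv.Perm (Fin l)) (β : Equiv.Perm (Fin m))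
    (w1 : Fin l → Fin kk) (w2 : Fin m → Fin kk) (i : ℕ) :
    biMatchAt j kk Υ (splitPerm X hX α β) (joinWord w1 w2) (l + i) ↔ biMatchAt j kk Υ β w2 i := by
  have hword : ∀ pf : ∀ b : Fin j, l + i + (b : ℕ) < l + m, ∀ pf' : ∀ b : Fin j, i + (b : ℕ) < m,
      (fun b : Fin j => joinWord w1 w2 ⟨l + i + (b : ℕ), pf b⟩)
        = (fun b : Fin j => w2 ⟨i + (b : ℕ), pf' b⟩) := by
    intro pf pf'
    funext b
    exact joinWord_mk_right' w1 w2 (pf' b) (pf b) (by omega)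
  have hperm : ∀ a b : Fin j, ∀ pfa : l + i + (a : ℕ) < l + m, ∀ pfb : l + i + (b : ℕ) < l + m,
      ∀ pfa' : i + (a : ℕ) < m, ∀ pfb' : i + (b : ℕ) < m,
      (splitPerm X hX α β ⟨l + i + (b : ℕ), pfb⟩ < splitPerm X hX α β ⟨l + i + (a : ℕ), pfa⟩
        ↔ β ⟨i + (b : ℕ), pfb'⟩ < β ⟨i + (a : ℕ), pfa'⟩) := by
    intro a b pfa pfb pfa' pfb'
    rw [splitPerm_mk_right' X hX α β pfb' pfb (by omega),
      splitPerm_mk_right' X hX α β pfa' pfa (by omega), eX_lt_iff]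
  constructor
  · rintro ⟨h, τu, hτu, h1, h2⟩
    refine ⟨by omega, τu, hτu, fun a => ?_, fun a => ?_⟩
    · rw [← h1 a]
      congr 1
      refine Finset.filter_congr fun b _ => ?_
      rw [hperm a b (by have := a.isLt; omega) (by have := b.isLt; omega)
        (by have := a.isLt; omega) (by have := b.isLt; omega)]
    · rw [← h2 a]
      congr 1
      exact (hword _ _).symm
  · rintro ⟨h, τu, hτu, h1, h2⟩
    refine ⟨by omega, τu, hτu, fun a => ?_, fun a => ?_⟩
    · rw [← h1 a]
      congr 1
      refine Finset.filter_congr fun b _ => ?_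
      rw [hperm a b (by have := a.isLt; omega) (by have := b.isLt; omega)
        (by have := a.isLt; omega) (by have := b.isLt; omega)]
    · rw [← h2 a]
      congr 1
      exact hword _ _


section Nlap

variable {n : ℕ} (σ : Equiv.Perm (Fin n)) (w : Fin n → Fin kk)

lemma nlap_zero_mem :
    0 ∈ {m : ℕ | ∃ S : Finset ℕ, S.card = m ∧ (∀ i ∈ S, biMatchAt j kk Υ σ w i) ∧
      ∀ i ∈ S, ∀ i' ∈ S, i < i' → i + j ≤ i'} := by
  exact ⟨∅, by simp⟩

lemma nlap_bdd (hj : 1 ≤ j) :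
    ∀ x ∈ {m : ℕ | ∃ S : Finset ℕ, S.card = m ∧ (∀ i ∈ S, biMatchAt j kk Υ σ w i) ∧
      ∀ i ∈ S, ∀ i' ∈ S, i < i' → i + j ≤ i'}, x ≤ n := by
  rintro x ⟨S, rfl, hmatch, -⟩
  have hsub : S ⊆ Finset.range n := by
    intro i hi
    obtain ⟨h, -⟩ := hmatch i hi
    exact Finset.mem_range.mpr (by omega)
  calc S.card ≤ (Finset.range n).card := Finset.card_le_card hsub
    _ = n := Finset.card_range n

lemma nlap_exists_optimal (hj : 1 ≤ j) :
    ∃ S : Finset ℕ, S.card = nlap j kk Υ σ w ∧ (∀ i ∈ S, biMatchAt j kk Υ σ w i) ∧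
      ∀ i ∈ S, ∀ i' ∈ S, i < i' → i + j ≤ i' := by
  have := Nat.sSup_mem (s := {m : ℕ | ∃ S : Finset ℕ, S.card = m ∧
      (∀ i ∈ S, biMatchAt j kk Υ σ w i) ∧ ∀ i ∈ S, ∀ i' ∈ S, i < i' → i + j ≤ i'})
    ⟨0, nlap_zero_mem Υ σ w⟩ ⟨n, nlap_bdd Υ σ w hj⟩
  exact this

lemma le_nlap (hj : 1 ≤ j) (S : Finset ℕ) (hmatch : ∀ i ∈ S, biMatchAt j kk Υ σ w i)
    (hgap : ∀ i ∈ S, ∀ i' ∈ S, i < i' → i + j ≤ i') : S.card ≤ nlap j kk Υ σ w := by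
  exact le_csSup ⟨n, nlap_bdd Υ σ w hj⟩ ⟨S, rfl, hmatch, hgap⟩

lemma nlap_le (M : ℕ)
    (h : ∀ S : Finset ℕ, (∀ i ∈ S, biMatchAt j kk Υ σ w i) →
      (∀ i ∈ S, ∀ i' ∈ S, i < i' → i + j ≤ i') → S.card ≤ M) : nlap j kk Υ σ w ≤ M := by
  refine csSup_le ⟨0, nlap_zero_mem Υ σ w⟩ ?_
  rintro x ⟨S, rfl, hmatch, hgap⟩
  exact h S hmatch hgap

lemma nlap_eq_zero (h : ∀ i, ¬ biMatchAt j kk Υ σ w i) : nlap j kk Υ σ w = 0 := by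
  refine Nat.le_antisymm ?_ (Nat.zero_le _)
  refine nlap_le Υ σ w 0 fun S hmatch _ => ?_
  have : S = ∅ := by
    by_contra hne
    obtain ⟨i, hi⟩ := Finset.nonempty_iff_ne_empty.mpr hne
    exact h i (hmatch i hi)
  simp [this]

end Nlap

lemma nlap_split (hj : 1 ≤ j) (X : Finset (Fin (l + m))) (hX : X.card = l)
    (α : Equiv.Perm (Fin l)) (β : Equiv.Perm (Fin m))
    (w1 : Fin l → Fin kk) (w2 : Fin m → Fin kk) {s : ℕ} (hsl : s + j = l)
    (hmatch : biMatchAt j kk Υ (splitPerm X hX α β) (joinWord w1 w2) s)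
    (hmin : ∀ i < s, ¬ biMatchAt j kk Υ (splitPerm X hX α β) (joinWord w1 w2) i) :
    nlap j kk Υ (splitPerm X hX α β) (joinWord w1 w2) = nlap j kk Υ β w2 + 1 := by
  have hsltl : s < l := by omega
  refine Nat.le_antisymm ?_ ?_
  · -- ≤ : from any optimal set for σ build one for β
    refine nlap_le Υ _ _ _ fun S hm hg => ?_
    rcases Finset.eq_empty_or_nonempty S with rfl | hne
    · simp
    set i0 := S.min' hne with hi0
    have hi0mem : i0 ∈ S := S.min'_mem hne
    have hi0s : s ≤ i0 := by
      by_contra hlt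
      exact hmin i0 (by omega) (hm i0 hi0mem)
    set T := (S.filter (fun i => l ≤ i)).image (fun i => i - l) with hT
    have hsub : S.erase i0 ⊆ S.filter (fun i => l ≤ i) := by
      intro i hi
      obtain ⟨hne', hiS⟩ := Finset.mem_erase.mp hi
      have hmin' : i0 ≤ i := S.min'_le i hiS
      have : i0 < i := lt_of_le_of_ne hmin' (Ne.symm hne')
      have := hg i0 hi0mem i hiS this
      exact Finset.mem_filter.mpr ⟨hiS, by omega⟩
    have hTcard : (S.filter (fun i => l ≤ i)).card = T.card := by
      rw [hT]
      rw [Finset.card_image_of_injOn]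
      intro a ha b hb hab
      have ha' := (Finset.mem_filter.mp ha).2
      have hb' := (Finset.mem_filter.mp hb).2
      have hab' : a - l = b - l := hab
      omega
    have hTm : ∀ t ∈ T, biMatchAt j kk Υ β w2 t := by
      intro t ht
      obtain ⟨i, hi, rfl⟩ := Finset.mem_image.mp ht
      obtain ⟨hiS, hil⟩ := Finset.mem_filter.mp hi
      have : l + (i - l) = i := by omega
      have := (biMatchAt_suffix Υ X hX α β w1 w2 (i - l)).mp (by rw [this]; exact hm i hiS)
      exact this
    have hTg : ∀ t ∈ T, ∀ t' ∈ T, t < t' → t + j ≤ t' := by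
      intro t ht t' ht' hlt
      obtain ⟨i, hi, rfl⟩ := Finset.mem_image.mp ht
      obtain ⟨i', hi', rfl⟩ := Finset.mem_image.mp ht'
      obtain ⟨hiS, hil⟩ := Finset.mem_filter.mp hi
      obtain ⟨hiS', hil'⟩ := Finset.mem_filter.mp hi'
      have : i < i' := by omega
      have := hg i hiS i' hiS' this
      omega
    have hTle := le_nlap Υ β w2 hj T hTm hTg
    have : S.card - 1 ≤ T.card := by
      rw [← hTcard]
      calc S.card - 1 = (S.erase i0).card := (Finset.card_erase_of_mem hi0mem).symm
        _ ≤ _ := Finset.card_le_card hsub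
    have hSpos : 1 ≤ S.card := Finset.card_pos.mpr hne
    omega
  · -- ≥
    obtain ⟨S2, hc2, hm2, hg2⟩ := nlap_exists_optimal Υ β w2 hj
    set S := insert s (S2.image (fun i => l + i)) with hS
    have hsnot : s ∉ S2.image (fun i => l + i) := by
      intro hmem
      obtain ⟨i, -, hi⟩ := Finset.mem_image.mp hmem
      omega
    have hcard : S.card = S2.card + 1 := by
      rw [hS, Finset.card_insert_of_notMem hsnot,
        Finset.card_image_of_injective _ (fun a b h => by omega)]
    have hm' : ∀ i ∈ S, biMatchAt j kk Υ (splitPerm X hX α β) (joinWord w1 w2) i := by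
      intro i hi
      rcases Finset.mem_insert.mp hi with rfl | hi
      · exact hmatch
      · obtain ⟨t, ht, rfl⟩ := Finset.mem_image.mp hi
        exact (biMatchAt_suffix Υ X hX α β w1 w2 t).mpr (hm2 t ht)
    have hg' : ∀ i ∈ S, ∀ i' ∈ S, i < i' → i + j ≤ i' := by
      intro i hi i' hi' hlt
      rcases Finset.mem_insert.mp hi with rfl | hi
      · rcases Finset.mem_insert.mp hi' with rfl | hi'
        · omega
        · obtain ⟨t, ht, rfl⟩ := Finset.mem_image.mp hi'
          omega
      · obtain ⟨t, ht, rfl⟩ := Finset.mem_image.mp hi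
        rcases Finset.mem_insert.mp hi' with rfl | hi'
        · omega
        · obtain ⟨t', ht', rfl⟩ := Finset.mem_image.mp hi'
          have : t < t' := by omega
          have := hg2 t ht t' ht' this
          omega
    have := le_nlap Υ _ _ hj S hm' hg'
    omega


/-- weight of a pair -/
def Wt {kk n : ℕ} (σ : Equiv.Perm (Fin n)) (w : Fin n → Fin kk) : K :=
  qv ^ inv' σ * pv ^ coinv' σ * rv ^ wsum w

section GF

variable (j kk : ℕ) (Υ : Set (Equiv.Perm (Fin j) × (Fin j → Fin kk)))

def Nfun (y : K) (n : ℕ) : K :=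
  ∑ σ : Equiv.Perm (Fin n), ∑ w : Fin n → Fin kk, Wt σ w * y ^ nlap j kk Υ σ w

def Bfun (n : ℕ) : K :=
  ∑ σ : Equiv.Perm (Fin n), ∑ w : Fin n → Fin kk,
    if (biMatchAt j kk Υ σ w (n - j) ∧ ∀ i < n - j, ¬ biMatchAt j kk Υ σ w i)
    then Wt σ w else 0

end GF

def Gsum (l m : ℕ) : K :=
  ∑ X : Finset (Fin (l + m)), if X.card = l then qv ^ invX X * pv ^ coinvX X else 0

lemma Gsum_eq_subtype (l m : ℕ) :
    Gsum l m = ∑ X : {X : Finset (Fin (l + m)) // X.card = l},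
      qv ^ invX (X : Finset (Fin (l+m))) * pv ^ coinvX (X : Finset (Fin (l+m))) := by
  rw [Gsum, ← Finset.sum_filter]
  exact Finset.sum_subtype _ (fun X => by simp) _

lemma Bfun_eq_zero {j kk : ℕ} (Υ : Set (Equiv.Perm (Fin j) × (Fin j → Fin kk)))
    {l : ℕ} (h : l < j) : Bfun j kk Υ l = 0 := by
  refine Finset.sum_eq_zero fun σ _ => Finset.sum_eq_zero fun w _ => ?_
  rw [if_neg]
  rintro ⟨⟨hle, -⟩, -⟩
  omega

set_option maxHeartbeats 1000000 in
lemma master (j kk : ℕ) (Υ : Set (Equiv.Perm (Fin j) × (Fin j → Fin kk))) (hj : 1 ≤ j)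
    (l m : ℕ) (hl : j ≤ l) (y : K) :
    (∑ σ : Equiv.Perm (Fin (l+m)), ∑ w : Fin (l+m) → Fin kk,
      if (biMatchAt j kk Υ σ w (l - j) ∧ ∀ i < l - j, ¬ biMatchAt j kk Υ σ w i)
      then Wt σ w * y ^ nlap j kk Υ σ w else 0)
    = y * Gsum l m * Bfun j kk Υ l * Nfun j kk Υ y m := by
  have key : ∀ (X : {X : Finset (Fin (l + m)) // X.card = l}) (α : Equiv.Perm (Fin l))
      (β : Equiv.Perm (Fin m)) (w1 : Fin l → Fin kk) (w2 : Fin m → Fin kk),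
      (if (biMatchAt j kk Υ (splitPerm X.1 X.2 α β) (joinWord w1 w2) (l - j) ∧
          ∀ i < l - j, ¬ biMatchAt j kk Υ (splitPerm X.1 X.2 α β) (joinWord w1 w2) i)
        then Wt (splitPerm X.1 X.2 α β) (joinWord w1 w2)
          * y ^ nlap j kk Υ (splitPerm X.1 X.2 α β) (joinWord w1 w2) else 0)
      = (qv ^ invX X.1 * pv ^ coinvX X.1) *
          ((if (biMatchAt j kk Υ α w1 (l - j) ∧ ∀ i < l - j, ¬ biMatchAt j kk Υ α w1 i)
            then Wt α w1 else 0) *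
          (y * (Wt β w2 * y ^ nlap j kk Υ β w2))) := by
    intro X α β w1 w2
    have hiff : (biMatchAt j kk Υ (splitPerm X.1 X.2 α β) (joinWord w1 w2) (l - j) ∧
          ∀ i < l - j, ¬ biMatchAt j kk Υ (splitPerm X.1 X.2 α β) (joinWord w1 w2) i)
        ↔ (biMatchAt j kk Υ α w1 (l - j) ∧ ∀ i < l - j, ¬ biMatchAt j kk Υ α w1 i) := by
      constructor
      · rintro ⟨h1, h2⟩
        refine ⟨(biMatchAt_prefix Υ X.1 X.2 α β w1 w2 (by omega)).mp h1, fun i hi hbi => ?_⟩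
        exact h2 i hi ((biMatchAt_prefix Υ X.1 X.2 α β w1 w2 (by omega)).mpr hbi)
      · rintro ⟨h1, h2⟩
        refine ⟨(biMatchAt_prefix Υ X.1 X.2 α β w1 w2 (by omega)).mpr h1, fun i hi hbi => ?_⟩
        exact h2 i hi ((biMatchAt_prefix Υ X.1 X.2 α β w1 w2 (by omega)).mp hbi)
    by_cases h : (biMatchAt j kk Υ α w1 (l - j) ∧ ∀ i < l - j, ¬ biMatchAt j kk Υ α w1 i)
    · rw [if_pos (hiff.mpr h), if_pos h]
      have hnl : nlap j kk Υ (splitPerm X.1 X.2 α β) (joinWord w1 w2)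
          = nlap j kk Υ β w2 + 1 := by
        refine nlap_split Υ hj X.1 X.2 α β w1 w2 (by omega : (l - j) + j = l) ?_ ?_
        · exact (biMatchAt_prefix Υ X.1 X.2 α β w1 w2 (by omega)).mpr h.1
        · intro i hi hbi
          exact h.2 i hi ((biMatchAt_prefix Υ X.1 X.2 α β w1 w2 (by omega)).mp hbi)
      rw [hnl]
      simp only [Wt, inv'_splitPerm, coinv'_splitPerm, wsum_joinWord, pow_add, pow_succ]
      ring
    · rw [if_neg (fun hc => h (hiff.mp hc)), if_neg h]
      ring
  rw [sum_perm_split (F := fun σ => ∑ w : Fin (l+m) → Fin kk,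
      if (biMatchAt j kk Υ σ w (l - j) ∧ ∀ i < l - j, ¬ biMatchAt j kk Υ σ w i)
      then Wt σ w * y ^ nlap j kk Υ σ w else 0)]
  have inner3 : ∀ (X : {X : Finset (Fin (l + m)) // X.card = l}) (α : Equiv.Perm (Fin l))
      (β : Equiv.Perm (Fin m)),
      (∑ w : Fin (l+m) → Fin kk,
        if (biMatchAt j kk Υ (splitPerm X.1 X.2 α β) w (l - j) ∧
            ∀ i < l - j, ¬ biMatchAt j kk Υ (splitPerm X.1 X.2 α β) w i)
        then Wt (splitPerm X.1 X.2 α β) w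
          * y ^ nlap j kk Υ (splitPerm X.1 X.2 α β) w else 0)
      = ∑ w1 : Fin l → Fin kk, ∑ w2 : Fin m → Fin kk,
          (qv ^ invX X.1 * pv ^ coinvX X.1) *
          ((if (biMatchAt j kk Υ α w1 (l - j) ∧ ∀ i < l - j, ¬ biMatchAt j kk Υ α w1 i)
            then Wt α w1 else 0) *
          (y * (Wt β w2 * y ^ nlap j kk Υ β w2))) := by
    intro X α β
    rw [sum_word_split]
    exact Finset.sum_congr rfl fun w1 _ => Finset.sum_congr rfl fun w2 _ => key X α β w1 w2
  rw [Finset.sum_congr rfl (fun X (_ : X ∈ Finset.univ) => Finset.sum_congr rfl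
    (fun α (_ : α ∈ Finset.univ) => Finset.sum_congr rfl
    (fun β (_ : β ∈ Finset.univ) => inner3 X α β)))]
  simp only [← Finset.mul_sum, ← Finset.sum_mul]
  rw [Gsum_eq_subtype, Bfun, Nfun]
  ring


lemma partition (j kk : ℕ) (Υ : Set (Equiv.Perm (Fin j) × (Fin j → Fin kk))) (hj : 1 ≤ j)
    (n : ℕ) (y : K) :
    Nfun j kk Υ y n = AΥ j kk Υ n + ∑ l ∈ Finset.Icc j n, (∑ σ : Equiv.Perm (Fin n),
      ∑ w : Fin n → Fin kk,
      if (biMatchAt j kk Υ σ w (l - j) ∧ ∀ i < l - j, ¬ biMatchAt j kk Υ σ w i)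
      then Wt σ w * y ^ nlap j kk Υ σ w else 0) := by
  have hswap : (∑ l ∈ Finset.Icc j n, ∑ σ : Equiv.Perm (Fin n), ∑ w : Fin n → Fin kk,
      (if (biMatchAt j kk Υ σ w (l - j) ∧ ∀ i < l - j, ¬ biMatchAt j kk Υ σ w i)
      then Wt σ w * y ^ nlap j kk Υ σ w else 0))
      = ∑ σ : Equiv.Perm (Fin n), ∑ w : Fin n → Fin kk, ∑ l ∈ Finset.Icc j n,
      (if (biMatchAt j kk Υ σ w (l - j) ∧ ∀ i < l - j, ¬ biMatchAt j kk Υ σ w i)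
      then Wt σ w * y ^ nlap j kk Υ σ w else 0) := by
    rw [Finset.sum_comm]
    exact Finset.sum_congr rfl fun σ _ => Finset.sum_comm
  rw [hswap, AΥ, Nfun, ← Finset.sum_add_distrib]
  refine Finset.sum_congr rfl fun σ _ => ?_
  rw [← Finset.sum_add_distrib]
  refine Finset.sum_congr rfl fun w _ => ?_
  by_cases hM : ∀ i : ℕ, ¬ biMatchAt j kk Υ σ w i
  · rw [if_pos hM]
    have hz : ∀ l ∈ Finset.Icc j n,
        (if (biMatchAt j kk Υ σ w (l - j) ∧ ∀ i < l - j, ¬ biMatchAt j kk Υ σ w i)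
        then Wt σ w * y ^ nlap j kk Υ σ w else 0) = 0 := by
      intro l _
      exact if_neg (by rintro ⟨h1, -⟩; exact hM _ h1)
    rw [Finset.sum_congr rfl hz, Finset.sum_const_zero, add_zero,
      nlap_eq_zero Υ σ w hM, pow_zero, mul_one, Wt]
  · rw [if_neg hM, zero_add]
    have hex : ∃ i, biMatchAt j kk Υ σ w i := by push_neg at hM; exact hM
    set s := Nat.find hex with hsdef
    have hs : biMatchAt j kk Υ σ w s := Nat.find_spec hex
    have hmin : ∀ i < s, ¬ biMatchAt j kk Υ σ w i := fun i hi => Nat.find_min hex hi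
    obtain ⟨hle, -⟩ := id hs
    rw [Finset.sum_eq_single (s + j)]
    · have hred : s + j - j = s := by omega
      rw [hred, if_pos ⟨hs, hmin⟩]
    · intro b hb hbne
      obtain ⟨hbj, hbn⟩ := Finset.mem_Icc.mp hb
      refine if_neg ?_
      rintro ⟨h1, h2⟩
      rcases Nat.lt_trichotomy (b - j) s with hlt | heq | hgt
      · exact hmin (b - j) hlt h1
      · exact hbne (by omega)
      · exact h2 s hgt hs
    · intro hnot
      exact absurd (Finset.mem_Icc.mpr ⟨by omega, by omega⟩) hnot

lemma SL_eq (j kk : ℕ) (Υ : Set (Equiv.Perm (Fin j) × (Fin j → Fin kk))) (hj : 1 ≤ j)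
    (y : K) {n l : ℕ} (h1 : j ≤ l) (h2 : l ≤ n) :
    (∑ σ : Equiv.Perm (Fin n), ∑ w : Fin n → Fin kk,
      if (biMatchAt j kk Υ σ w (l - j) ∧ ∀ i < l - j, ¬ biMatchAt j kk Υ σ w i)
      then Wt σ w * y ^ nlap j kk Υ σ w else 0)
    = y * Gsum l (n - l) * Bfun j kk Υ l * Nfun j kk Υ y (n - l) := by
  obtain ⟨m, rfl⟩ : ∃ m, n = l + m := ⟨n - l, by omega⟩
  rw [add_tsub_cancel_left]
  exact master j kk Υ hj l m h1 y

/-- the total weight of permutations -/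
def Fsum (n : ℕ) : K := ∑ σ : Equiv.Perm (Fin n), qv ^ inv' σ * pv ^ coinv' σ

lemma Fsum_split (l m : ℕ) : Fsum (l + m) = Gsum l m * (Fsum l * Fsum m) := by
  simp only [Fsum]
  rw [sum_perm_split (F := fun σ => qv ^ inv' σ * pv ^ coinv' σ)]
  have key : ∀ (X : {X : Finset (Fin (l + m)) // X.card = l}) (α : Equiv.Perm (Fin l))
      (β : Equiv.Perm (Fin m)),
      qv ^ inv' (splitPerm X.1 X.2 α β) * pv ^ coinv' (splitPerm X.1 X.2 α β)
      = (qv ^ invX X.1 * pv ^ coinvX X.1) *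
        ((qv ^ inv' α * pv ^ coinv' α) * (qv ^ inv' β * pv ^ coinv' β)) := by
    intro X α β
    rw [inv'_splitPerm, coinv'_splitPerm, pow_add, pow_add, pow_add, pow_add]
    ring
  rw [Finset.sum_congr rfl (fun X (_ : X ∈ Finset.univ) => Finset.sum_congr rfl
    (fun α (_ : α ∈ Finset.univ) => Finset.sum_congr rfl
    (fun β (_ : β ∈ Finset.univ) => key X α β)))]
  simp only [← Finset.mul_sum, ← Finset.sum_mul]
  rw [Gsum_eq_subtype]

lemma Fsum_zero : Fsum 0 = 1 := by
  rw [Fsum]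
  have h : ∀ σ : Equiv.Perm (Fin 0), qv ^ inv' σ * pv ^ coinv' σ = 1 := by
    intro σ
    have h1 : inv' σ = 0 := by simp [inv']
    have h2 : coinv' σ = 0 := by simp [coinv']
    rw [h1, h2, pow_zero, pow_zero, mul_one]
  rw [Finset.sum_congr rfl fun σ _ => h σ]
  simp

lemma Fsum_one : Fsum 1 = 1 := by
  rw [Fsum]
  have h : ∀ σ : Equiv.Perm (Fin 1), qv ^ inv' σ * pv ^ coinv' σ = 1 := by
    intro σ
    have h1 : inv' σ = 0 := by
      rw [inv', Finset.card_eq_zero, Finset.filter_eq_empty_iff]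
      rintro ⟨i, i'⟩ - ⟨hlt, -⟩
      exact absurd (Subsingleton.elim i i') (ne_of_lt hlt)
    have h2 : coinv' σ = 0 := by
      rw [coinv', Finset.card_eq_zero, Finset.filter_eq_empty_iff]
      rintro ⟨i, i'⟩ - ⟨hlt, -⟩
      exact absurd (Subsingleton.elim i i') (ne_of_lt hlt)
    rw [h1, h2, pow_zero, pow_zero, mul_one]
  rw [Finset.sum_congr rfl fun σ _ => h σ]
  simp


lemma invX_compl_singleton {n : ℕ} (v : Fin (n + 1)) :
    invX ({v}ᶜ : Finset (Fin (n+1))) = n - v := by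
  rw [invX, Finset.card_filter, Fintype.sum_prod_type]
  have inner : ∀ u1 : Fin (n+1), (∑ u2 : Fin (n+1),
      if u1 ∈ ({v}ᶜ : Finset (Fin (n+1))) ∧ u2 ∉ ({v}ᶜ : Finset (Fin (n+1))) ∧ u2 < u1
        then (1:ℕ) else 0)
      = if v < u1 then 1 else 0 := by
    intro u1
    rw [Finset.sum_eq_single v]
    · by_cases h : v < u1
      · rw [if_pos ⟨by simp [Finset.mem_compl]; exact (ne_of_lt h).symm, by simp, h⟩, if_pos h]
      · rw [if_neg (by rintro ⟨-, -, hlt⟩; exact h hlt), if_neg h]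
    · intro b _ hb
      refine if_neg ?_
      rintro ⟨-, hb2, -⟩
      simp [Finset.mem_compl] at hb2
      exact hb hb2
    · intro h
      exact absurd (Finset.mem_univ v) h
  rw [Finset.sum_congr rfl fun u1 _ => inner u1]
  rw [← Finset.card_filter]
  rw [show Finset.univ.filter (fun u => v < u) = Finset.Ioi v from by ext u; simp]
  rw [Fin.card_Ioi]
  omega

lemma coinvX_compl_singleton {n : ℕ} (v : Fin (n + 1)) :
    coinvX ({v}ᶜ : Finset (Fin (n+1))) = v := by
  rw [coinvX, Finset.card_filter, Fintype.sum_prod_type]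
  have inner : ∀ u1 : Fin (n+1), (∑ u2 : Fin (n+1),
      if u1 ∈ ({v}ᶜ : Finset (Fin (n+1))) ∧ u2 ∉ ({v}ᶜ : Finset (Fin (n+1))) ∧ u1 < u2
        then (1:ℕ) else 0)
      = if u1 < v then 1 else 0 := by
    intro u1
    rw [Finset.sum_eq_single v]
    · by_cases h : u1 < v
      · rw [if_pos ⟨by simp [Finset.mem_compl]; exact (ne_of_lt h), by simp, h⟩, if_pos h]
      · rw [if_neg (by rintro ⟨-, -, hlt⟩; exact h hlt), if_neg h]
    · intro b _ hb
      refine if_neg ?_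
      rintro ⟨-, hb2, -⟩
      simp [Finset.mem_compl] at hb2
      exact hb hb2
    · intro h
      exact absurd (Finset.mem_univ v) h
  rw [Finset.sum_congr rfl fun u1 _ => inner u1]
  rw [← Finset.card_filter]
  rw [show Finset.univ.filter (fun u => u < v) = Finset.Iio v from by ext u; simp]
  rw [Fin.card_Iio]

/-- the complement-singleton equivalence -/
def complSingEquiv (n : ℕ) : Fin (n + 1) ≃ {X : Finset (Fin (n + 1)) // X.card = n} where
  toFun v := ⟨({v} : Finset (Fin (n+1)))ᶜ, by
    rw [Finset.card_compl]; simp⟩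
  invFun X := (X.1ᶜ).min' (by
    rw [← Finset.card_pos, Finset.card_compl, X.2]; simp)
  left_inv v := by
    simp only [compl_compl]
    exact Finset.min'_singleton v
  right_inv X := by
    have hpos : (X.1ᶜ).Nonempty := by
      rw [← Finset.card_pos, Finset.card_compl, X.2]; simp
    have hc : X.1ᶜ.card = 1 := by
      rw [Finset.card_compl, X.2]; simp
    obtain ⟨a, ha⟩ := Finset.card_eq_one.mp hc
    apply Subtype.ext
    show ({(X.1ᶜ).min' _} : Finset (Fin (n+1)))ᶜ = X.1
    set b := (X.1ᶜ).min' hpos with hb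
    have hmem : b ∈ X.1ᶜ := (X.1ᶜ).min'_mem hpos
    have h1 : X.1ᶜ = {b} := by
      rw [Finset.eq_singleton_iff_unique_mem]
      refine ⟨hmem, fun x hx => ?_⟩
      rw [ha] at hx
      rw [ha] at hmem
      rw [Finset.mem_singleton.mp hx, ← Finset.mem_singleton.mp hmem]
    calc ({b} : Finset (Fin (n+1)))ᶜ = (X.1ᶜ)ᶜ := by rw [← h1]
      _ = X.1 := compl_compl _

lemma Gsum_n1 (n : ℕ) : Gsum n 1 = pqInt pv qv (n + 1) := by
  rw [Gsum_eq_subtype]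
  rw [← Equiv.sum_comp (complSingEquiv n) (fun X => qv ^ invX (X : Finset (Fin (n+1)))
    * pv ^ coinvX (X : Finset (Fin (n+1))))]
  have hval : ∀ v : Fin (n+1), qv ^ invX (((complSingEquiv n) v : {X : Finset (Fin (n+1)) //
      X.card = n}) : Finset (Fin (n+1))) * pv ^ coinvX ((((complSingEquiv n) v) :
        {X : Finset (Fin (n+1)) // X.card = n}) : Finset (Fin (n+1)))
      = qv ^ (n - (v:ℕ)) * pv ^ (v:ℕ) := by
    intro v
    have : (((complSingEquiv n) v : {X : Finset (Fin (n+1)) // X.card = n}) :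
        Finset (Fin (n+1))) = ({v} : Finset (Fin (n+1)))ᶜ := rfl
    rw [this, invX_compl_singleton, coinvX_compl_singleton]
  rw [Finset.sum_congr rfl fun v _ => hval v]
  rw [Fin.sum_univ_eq_sum_range (fun i => qv ^ (n - i) * pv ^ i)]
  rw [pqInt]
  rw [← Finset.sum_range_reflect]
  refine Finset.sum_congr rfl fun i hi => ?_
  have hi' := Finset.mem_range.mp hi
  have h0 : n + 1 - 1 - i = n - i := by omega
  have h2 : n - (n - i) = i := by omega
  rw [h0, h2, mul_comm]

lemma Fsum_eq_pqFac (n : ℕ) : Fsum n = pqFac pv qv n := by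
  induction n with
  | zero => rw [Fsum_zero, pqFac]; simp
  | succ n ih =>
    have := Fsum_split n 1
    rw [Fsum_one, mul_one, Gsum_n1, ih] at this
    rw [this, pqFac, pqFac, Finset.prod_range_succ, mul_comm]

lemma Gsum_mul_fac (l m : ℕ) :
    Gsum l m * (pqFac pv qv l * pqFac pv qv m) = pqFac pv qv (l + m) := by
  rw [← Fsum_eq_pqFac, ← Fsum_eq_pqFac, ← Fsum_eq_pqFac, ← Fsum_split]


lemma pqInt_ne_zero {m : ℕ} (hm : 1 ≤ m) : pqInt pv qv m ≠ 0 := by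
  have heq : pqInt pv qv m = algebraMap (MvPolynomial (Fin 4) ℚ) K
      (∑ i ∈ Finset.range m, (MvPolynomial.X 0) ^ (m - 1 - i) * (MvPolynomial.X 1) ^ i) := by
    rw [map_sum, pqInt]
    refine Finset.sum_congr rfl fun i _ => ?_
    rw [map_mul, map_pow, map_pow]
    rfl
  rw [heq, Ne, IsFractionRing.to_map_eq_zero_iff]
  intro h0
  have := congrArg (MvPolynomial.eval (fun _ => (1 : ℚ))) h0
  rw [map_sum] at this
  simp only [map_mul, map_pow, MvPolynomial.eval_X, one_pow, one_mul, map_zero] at this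
  rw [Finset.sum_const, nsmul_eq_mul, mul_one] at this
  have : (m : ℚ) = 0 := by simpa using this
  exact_mod_cast absurd this (by positivity)

lemma pqFac_ne_zero (n : ℕ) : pqFac pv qv n ≠ 0 := by
  rw [pqFac]
  refine Finset.prod_ne_zero_iff.mpr fun i _ => pqInt_ne_zero (by omega)

lemma AΥ_zero (j kk : ℕ) (Υ : Set (Equiv.Perm (Fin j) × (Fin j → Fin kk))) (hj : 1 ≤ j) :
    AΥ j kk Υ 0 = 1 := by
  rw [AΥ]
  have h : ∀ (σ : Equiv.Perm (Fin 0)) (w : Fin 0 → Fin kk),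
      (if (∀ i : ℕ, ¬ biMatchAt j kk Υ σ w i) then
        qv ^ inv' σ * pv ^ coinv' σ * rv ^ wsum w else 0) = 1 := by
    intro σ w
    rw [if_pos (fun i => by rintro ⟨hle, -⟩; omega)]
    have h1 : inv' σ = 0 := by simp [inv']
    have h2 : coinv' σ = 0 := by simp [coinv']
    have h3 : wsum w = 0 := by simp [wsum]
    rw [h1, h2, h3]
    simp
  rw [Finset.sum_congr rfl fun σ _ => Finset.sum_congr rfl fun w _ => h σ w]
  simp

lemma Nfun_one (j kk : ℕ) (Υ : Set (Equiv.Perm (Fin j) × (Fin j → Fin kk))) (hj : 1 ≤ j)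
    (n : ℕ) :
    Nfun j kk Υ 1 n = pqFac pv qv n * (∑ i ∈ Finset.range kk, rv ^ i) ^ n := by
  rw [Nfun]
  have h : ∀ (σ : Equiv.Perm (Fin n)) (w : Fin n → Fin kk),
      Wt σ w * (1:K) ^ nlap j kk Υ σ w = (qv ^ inv' σ * pv ^ coinv' σ) * rv ^ wsum w := by
    intro σ w
    rw [one_pow, mul_one, Wt]
  rw [Finset.sum_congr rfl fun σ _ => Finset.sum_congr rfl fun w _ => h σ w]
  have hw : (∑ w : Fin n → Fin kk, rv ^ wsum w)
      = (∑ i ∈ Finset.range kk, rv ^ i) ^ n := by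
    have h1 : ∀ w : Fin n → Fin kk, rv ^ wsum w = ∏ i : Fin n, rv ^ ((w i : ℕ)) := by
      intro w
      rw [wsum, ← Finset.prod_pow_eq_pow_sum]
    rw [Finset.sum_congr rfl fun w _ => h1 w]
    have h2 := Finset.prod_univ_sum (ι := Fin n) (t := fun _ => (Finset.univ : Finset (Fin kk)))
      (f := fun _ c => rv ^ (c : ℕ))
    rw [Fintype.piFinset_univ] at h2
    rw [← h2, Finset.prod_const, Finset.card_univ, Fintype.card_fin]
    congr 1
    rw [← Fin.sum_univ_eq_sum_range (fun i => rv ^ i) kk]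
  calc ∑ σ : Equiv.Perm (Fin n), ∑ w : Fin n → Fin kk,
        (qv ^ inv' σ * pv ^ coinv' σ) * rv ^ wsum w
      = ∑ σ : Equiv.Perm (Fin n), (qv ^ inv' σ * pv ^ coinv' σ) * ∑ w : Fin n → Fin kk,
          rv ^ wsum w := by
        refine Finset.sum_congr rfl fun σ _ => ?_
        rw [Finset.mul_sum]
    _ = Fsum n * ((∑ i ∈ Finset.range kk, rv ^ i) ^ n) := by
        rw [← Finset.sum_mul, hw, Fsum]
    _ = _ := by rw [Fsum_eq_pqFac]


lemma R1coeff (j kk : ℕ) (Υ : Set (Equiv.Perm (Fin j) × (Fin j → Fin kk))) (hj : 1 ≤ j)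
    (y : K) (n : ℕ) :
    Nfun j kk Υ y n / pqFac pv qv n
    = AΥ j kk Υ n / pqFac pv qv n
      + y * ∑ p ∈ Finset.HasAntidiagonal.antidiagonal n,
          (Bfun j kk Υ p.1 / pqFac pv qv p.1) * (Nfun j kk Υ y p.2 / pqFac pv qv p.2) := by
  rw [partition j kk Υ hj n y, add_div]
  congr 1
  rw [Finset.sum_div]
  have step1 : ∀ l ∈ Finset.Icc j n,
      (∑ σ : Equiv.Perm (Fin n), ∑ w : Fin n → Fin kk,
        if (biMatchAt j kk Υ σ w (l - j) ∧ ∀ i < l - j, ¬ biMatchAt j kk Υ σ w i)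
        then Wt σ w * y ^ nlap j kk Υ σ w else 0) / pqFac pv qv n
      = y * ((Bfun j kk Υ l / pqFac pv qv l) *
            (Nfun j kk Υ y (n - l) / pqFac pv qv (n - l))) := by
    intro l hl
    obtain ⟨h1, h2⟩ := Finset.mem_Icc.mp hl
    rw [SL_eq j kk Υ hj y h1 h2]
    have hg := Gsum_mul_fac l (n - l)
    have hn : l + (n - l) = n := by omega
    rw [hn] at hg
    rw [div_eq_iff (pqFac_ne_zero n), ← hg]
    field_simp [pqFac_ne_zero l, pqFac_ne_zero (n - l)]
  rw [Finset.sum_congr rfl step1, ← Finset.mul_sum]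
  congr 1
  rw [Finset.Nat.sum_antidiagonal_eq_sum_range_succ_mk]
  refine Finset.sum_subset ?_ ?_
  · intro x hx
    obtain ⟨hx1, hx2⟩ := Finset.mem_Icc.mp hx
    exact Finset.mem_range.mpr (by omega)
  · intro x hx hnot
    have hx' := Finset.mem_range.mp hx
    have hlt : x < j := by
      by_contra hge
      exact hnot (Finset.mem_Icc.mpr ⟨by omega, by omega⟩)
    rw [Bfun_eq_zero Υ hlt, zero_div, zero_mul]

lemma R1series (j kk : ℕ) (Υ : Set (Equiv.Perm (Fin j) × (Fin j → Fin kk))) (hj : 1 ≤ j)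
    (y : K) :
    PowerSeries.mk (fun n => Nfun j kk Υ y n / pqFac pv qv n)
    = PowerSeries.mk (fun n => AΥ j kk Υ n / pqFac pv qv n)
      + PowerSeries.C y * (PowerSeries.mk (fun n => Bfun j kk Υ n / pqFac pv qv n)
        * PowerSeries.mk (fun n => Nfun j kk Υ y n / pqFac pv qv n)) := by
  ext n
  rw [PowerSeries.coeff_mk, map_add, PowerSeries.coeff_mk, PowerSeries.coeff_C_mul,
    PowerSeries.coeff_mul]
  simp only [PowerSeries.coeff_mk]
  exact R1coeff j kk Υ hj y n

lemma geom_aux (R : K) :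
    (1 - PowerSeries.C R * PowerSeries.X) * PowerSeries.mk (fun n => R ^ n) = 1 := by
  ext n
  rw [sub_mul, one_mul, map_sub, mul_assoc]
  cases n with
  | zero =>
    simp [PowerSeries.constantCoeff_mk]
  | succ n =>
    rw [PowerSeries.coeff_C_mul, PowerSeries.coeff_succ_X_mul, PowerSeries.coeff_mk,
      PowerSeries.coeff_mk, PowerSeries.coeff_one]
    simp [pow_succ]
    ring

end S5

theorem statement5 (k j : ℕ) (hk : 2 ≤ k) (hj : 1 ≤ j)
    (Υ : Set (Equiv.Perm (Fin j) × (Fin j → Fin k)))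
    (hred : ∀ τu ∈ Υ, ∀ a : Fin j, (τu.2 a : ℕ) = redCount τu.2 a) :
    (PowerSeries.mk fun n => (∑ σ : Equiv.Perm (Fin n), ∑ w : Fin n → Fin k,
        qv ^ inv' σ * pv ^ coinv' σ * rv ^ wsum w * xv ^ nlap j k Υ σ w) /
          pqFac pv qv n)
    = (PowerSeries.mk fun n => AΥ j k Υ n / pqFac pv qv n) *
      (1 - PowerSeries.C xv * (1 +
        (PowerSeries.C (∑ i ∈ Finset.range k, rv ^ i) * PowerSeries.X - 1) *
          PowerSeries.mk fun n => AΥ j k Υ n / pqFac pv qv n))⁻¹ := by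
  classical
  have hj1 : 1 ≤ j := hj
  set R : K := ∑ i ∈ Finset.range k, rv ^ i with hR
  have hLHS : (PowerSeries.mk fun n => (∑ σ : Equiv.Perm (Fin n), ∑ w : Fin n → Fin k,
      qv ^ inv' σ * pv ^ coinv' σ * rv ^ wsum w * xv ^ nlap j k Υ σ w) / pqFac pv qv n)
      = PowerSeries.mk (fun n => S5.Nfun j k Υ xv n / pqFac pv qv n) := by
    refine congrArg _ (funext fun n => ?_)
    simp only [S5.Nfun, S5.Wt]
  rw [hLHS]
  set Aser := PowerSeries.mk (fun n => AΥ j k Υ n / pqFac pv qv n) with hAser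
  set Bser := PowerSeries.mk (fun n => S5.Bfun j k Υ n / pqFac pv qv n) with hBser
  set Nser := PowerSeries.mk (fun n => S5.Nfun j k Υ xv n / pqFac pv qv n) with hNser
  set Tser := PowerSeries.mk (fun n => S5.Nfun j k Υ 1 n / pqFac pv qv n) with hTser
  have hN : Nser = Aser + PowerSeries.C xv * (Bser * Nser) := S5.R1series j k Υ hj1 xv
  have hT : Tser = Aser + Bser * Tser := by
    have := S5.R1series j k Υ hj1 1
    rw [map_one, one_mul] at this
    exact this
  have hTR : Tser = PowerSeries.mk (fun n => R ^ n) := by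
    rw [hTser]
    refine congrArg _ (funext fun n => ?_)
    rw [S5.Nfun_one j k Υ hj1 n, ← hR]
    exact mul_div_cancel_left₀ _ (S5.pqFac_ne_zero n)
  have hTgeom : Tser * (1 - PowerSeries.C R * PowerSeries.X) = 1 := by
    rw [hTR, mul_comm]
    exact S5.geom_aux R
  have h1 : Bser * Tser = Tser - Aser := by linear_combination -hT
  have hB : Bser = 1 - Aser * (1 - PowerSeries.C R * PowerSeries.X) := by
    calc Bser = Bser * (Tser * (1 - PowerSeries.C R * PowerSeries.X)) := by
          rw [hTgeom, mul_one]
      _ = (Bser * Tser) * (1 - PowerSeries.C R * PowerSeries.X) := by ring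
      _ = (Tser - Aser) * (1 - PowerSeries.C R * PowerSeries.X) := by rw [h1]
      _ = Tser * (1 - PowerSeries.C R * PowerSeries.X)
            - Aser * (1 - PowerSeries.C R * PowerSeries.X) := by ring
      _ = 1 - Aser * (1 - PowerSeries.C R * PowerSeries.X) := by rw [hTgeom]
  set D := 1 - PowerSeries.C xv * (1 + (PowerSeries.C R * PowerSeries.X - 1) * Aser)
    with hD
  have hDB : D = 1 - PowerSeries.C xv * Bser := by
    rw [hD, hB]
    ring
  have hND : Nser * D = Aser := by
    rw [hDB]
    linear_combination hN
  have hA0 : PowerSeries.constantCoeff Aser = 1 := by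
    rw [hAser, PowerSeries.constantCoeff_mk, S5.AΥ_zero j k Υ hj1, pqFac]
    simp
  have hDunit : PowerSeries.constantCoeff D ≠ 0 := by
    have : PowerSeries.constantCoeff D = 1 := by
      rw [hD]
      rw [map_sub, map_one, map_mul, map_add, map_one, map_mul, map_sub, map_mul,
        PowerSeries.constantCoeff_X, PowerSeries.constantCoeff_C, PowerSeries.constantCoeff_C,
        map_one, hA0]
      ring
    rw [this]
    exact one_ne_zero
  calc Nser = Nser * (D * D⁻¹) := by rw [PowerSeries.mul_inv_cancel D hDunit, mul_one]
    _ = (Nser * D) * D⁻¹ := by ring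
    _ = Aser * D⁻¹ := by rw [hND]
end
end

section
/- For all integers k ≥ 2 and n ≥ 1, the number of pairs (σ,w) ∈ C_k≀S_n such that there is no index i with 1 ≤ i ≤ n−1, σ_i < σ_{i+1} and w_i = w_{i+1} equals Σ_{j=1}^{n} (−1)^{n−j} · Surj(n,j) · k^j, where Surj(n,j) denotes the number of surjective functions from an n-element set onto a j-element set (equivalently Surj(n,j) = j!·S(n,j), with S(n,j) the Stirling number of the second kind). -/
open Finset
open scoped Classical

/-- The number of surjective functions from an `n`-element set onto a `j`-element set
(equal to `j! · S(n,j)` with `S(n,j)` the Stirling number of the second kind). -/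
def Surj (n j : ℕ) : ℕ :=
  ((Finset.univ : Finset (Fin n → Fin j)).filter Function.Surjective).card

section AuxAll
variable {m : ℕ}

/-- count of non-S edges strictly below t -/
def cnt (S : Finset (Fin m)) (t : ℕ) : ℕ :=
  (univ.filter (fun j : Fin m => (j : ℕ) < t ∧ j ∉ S)).card

lemma cnt_zero (S : Finset (Fin m)) : cnt S 0 = 0 := by
  simp [cnt]

lemma cnt_succ (S : Finset (Fin m)) (i : Fin m) :
    cnt S ((i : ℕ) + 1) = cnt S i + (if i ∈ S then 0 else 1) := by
  unfold cnt
  have h : (univ.filter (fun j : Fin m => (j : ℕ) < (i : ℕ) + 1 ∧ j ∉ S))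
      = (univ.filter (fun j : Fin m => (j : ℕ) < (i : ℕ) ∧ j ∉ S)) ∪
        (univ.filter (fun j : Fin m => j = i ∧ j ∉ S)) := by
    ext j
    simp only [mem_filter, mem_union, mem_univ, true_and]
    constructor
    · rintro ⟨hj, hjS⟩
      rcases Nat.lt_succ_iff_lt_or_eq.mp hj with h | h
      · exact Or.inl ⟨h, hjS⟩
      · exact Or.inr ⟨Fin.ext h, hjS⟩
    · rintro (⟨hj, hjS⟩ | ⟨rfl, hjS⟩)
      · exact ⟨Nat.lt_succ_of_lt hj, hjS⟩
      · exact ⟨Nat.lt_succ_self _, hjS⟩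
  rw [h, Finset.card_union_of_disjoint]
  · congr 1
    by_cases hiS : i ∈ S
    · rw [Finset.filter_eq_empty_iff.mpr (by rintro j _ ⟨rfl, hj⟩; exact hj hiS)]
      simp [hiS]
    · have : (univ.filter (fun j : Fin m => j = i ∧ j ∉ S)) = {i} := by
        ext j; simp only [mem_filter, mem_univ, true_and, mem_singleton]
        exact ⟨fun h => h.1, fun h => ⟨h, h ▸ hiS⟩⟩
      rw [this]; simp [hiS]
  · rw [Finset.disjoint_left]
    rintro j hj hj'
    simp only [mem_filter] at hj hj'
    omega

lemma cnt_succ_le (S : Finset (Fin m)) (t : ℕ) : cnt S (t + 1) ≤ cnt S t + 1 := by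
  unfold cnt
  have h : (univ.filter (fun j : Fin m => (j : ℕ) < t + 1 ∧ j ∉ S))
      ⊆ (univ.filter (fun j : Fin m => (j : ℕ) < t ∧ j ∉ S)) ∪
        (univ.filter (fun j : Fin m => (j : ℕ) = t)) := by
    intro j hj
    simp only [mem_filter, mem_univ, true_and, mem_union] at hj ⊢
    rcases Nat.lt_succ_iff_lt_or_eq.mp hj.1 with h | h
    · exact Or.inl ⟨h, hj.2⟩
    · exact Or.inr h
  calc _ ≤ _ := Finset.card_le_card h
    _ ≤ _ := (Finset.card_union_le _ _).trans (by
        gcongr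
        apply Finset.card_le_one.mpr
        intro a ha b hb
        simp only [mem_filter] at ha hb
        exact Fin.ext (ha.2.trans hb.2.symm))

lemma cnt_mono (S : Finset (Fin m)) : Monotone (cnt S) := by
  apply monotone_nat_of_le_succ
  intro t
  apply Finset.card_le_card
  intro j hj
  simp only [cnt, mem_filter, mem_univ, true_and] at hj ⊢
  exact ⟨by omega, hj.2⟩

lemma cnt_le (S : Finset (Fin m)) (t : ℕ) : cnt S t ≤ m - S.card := by
  unfold cnt
  have : (univ.filter (fun j : Fin m => (j : ℕ) < t ∧ j ∉ S)) ⊆ Sᶜ := by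
    intro j hj
    simp only [mem_filter, mem_univ, true_and, mem_compl] at hj ⊢
    exact hj.2
  calc _ ≤ Sᶜ.card := Finset.card_le_card this
    _ = _ := by rw [Finset.card_compl, Fintype.card_fin]

lemma cnt_top (S : Finset (Fin m)) (t : ℕ) (ht : m ≤ t) : cnt S t = m - S.card := by
  unfold cnt
  have : (univ.filter (fun j : Fin m => (j : ℕ) < t ∧ j ∉ S)) = Sᶜ := by
    ext j
    simp only [mem_filter, mem_univ, true_and, mem_compl]
    exact ⟨fun h => h.2, fun h => ⟨lt_of_lt_of_le j.isLt ht, h⟩⟩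
  rw [this, Finset.card_compl, Fintype.card_fin]

lemma natIVT (f : ℕ → ℕ) (h0 : f 0 = 0) (hstep : ∀ t, f (t + 1) ≤ f t + 1) :
    ∀ N v, v ≤ f N → ∃ t ≤ N, f t = v := by
  intro N
  induction N with
  | zero => intro v hv; exact ⟨0, le_refl 0, by omega⟩
  | succ N ih =>
    intro v hv
    by_cases h : v ≤ f N
    · obtain ⟨t, ht, h⟩ := ih v h
      exact ⟨t, by omega, h⟩
    · have := hstep N
      have : v = f (N + 1) := by omega
      exact ⟨N + 1, le_refl _, this.symm⟩

/-- chain lemma: if all edges strictly between are ascents, σ increases -/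
lemma chain (σ : Equiv.Perm (Fin (m + 1))) (a b : ℕ) (hab : a < b) (hb : b ≤ m)
    (hedges : ∀ t : Fin m, a ≤ (t : ℕ) → (t : ℕ) < b → σ t.castSucc < σ t.succ) :
    σ ⟨a, by omega⟩ < σ ⟨b, by omega⟩ := by
  induction b with
  | zero => omega
  | succ b ih =>
    have hb' : b < m := by omega
    have hlast : σ (⟨b, hb'⟩ : Fin m).castSucc < σ (⟨b, hb'⟩ : Fin m).succ :=
      hedges ⟨b, hb'⟩ (show a ≤ b by omega) (show b < b + 1 by omega)
    have hcs : ((⟨b, hb'⟩ : Fin m).castSucc : Fin (m+1)) = ⟨b, by omega⟩ := rfl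
    have hsc : ((⟨b, hb'⟩ : Fin m).succ : Fin (m+1)) = ⟨b + 1, by omega⟩ := rfl
    rw [hcs, hsc] at hlast
    rcases Nat.lt_or_ge a b with h | h
    · exact lt_trans (ih h (by omega) (fun t h1 h2 => hedges t h1 (by omega))) hlast
    · have : a = b := by omega
      subst this
      exact hlast

end AuxAll

lemma finSub_right_inj {k : ℕ} {c : Fin k} : Function.Injective (fun a : Fin k => a - c) := by
  intro a b h
  have h' : (k - c.val + a.val) % k = (k - c.val + b.val) % k := by
    have := congrArg Fin.val h; simpa [Fin.sub_def] using this
  have h2 : a.val % k = b.val % k := Nat.ModEq.add_left_cancel' _ h'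
  exact Fin.ext (by rwa [Nat.mod_eq_of_lt a.isLt, Nat.mod_eq_of_lt b.isLt] at h2)

lemma finSub_eq_zero_iff {k : ℕ} [NeZero k] (a b : Fin k) : a - b = 0 ↔ a = b :=
  ⟨fun h => finSub_right_inj (h.trans Fin.sub_self.symm), fun h => h ▸ Fin.sub_self⟩

def Dmap (k m : ℕ) (w : Fin (m + 1) → Fin k) (i : Fin (m + 1)) : Fin k :=
  if h : (i : ℕ) = 0 then w i else w i - w ⟨(i : ℕ) - 1, by omega⟩

lemma Dmap_zero (k m : ℕ) (w : Fin (m + 1) → Fin k) (h : 0 < m + 1) :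
    Dmap k m w ⟨0, h⟩ = w ⟨0, h⟩ := dif_pos rfl

lemma Dmap_pos (k m : ℕ) (w : Fin (m + 1) → Fin k) (t : ℕ) (h : t < m + 1) (h0 : t ≠ 0) :
    Dmap k m w ⟨t, h⟩ = w ⟨t, h⟩ - w ⟨t - 1, by omega⟩ := dif_neg h0

lemma Dmap_succ (k m : ℕ) (w : Fin (m + 1) → Fin k) (i : Fin m) :
    Dmap k m w i.succ = w i.succ - w i.castSucc := by
  have h : (i.succ : Fin (m + 1)) = ⟨(i : ℕ) + 1, by omega⟩ := rfl
  rw [h, Dmap_pos k m w ((i : ℕ) + 1) (by omega) (by omega)]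
  rfl

lemma Dmap_inj (k m : ℕ) : Function.Injective (Dmap k m) := by
  intro w w' hww
  have key : ∀ t, ∀ (ht : t < m + 1), w ⟨t, ht⟩ = w' ⟨t, ht⟩ := by
    intro t
    induction t using Nat.strong_induction_on with
    | _ t ih =>
      intro ht
      by_cases h0 : t = 0
      · subst h0
        have := congrFun hww ⟨0, ht⟩
        rwa [Dmap_zero, Dmap_zero] at this
      · have heq := congrFun hww ⟨t, ht⟩
        rw [Dmap_pos k m w t ht h0, Dmap_pos k m w' t ht h0] at heq
        have hih := ih (t - 1) (by omega) (by omega)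
        rw [hih] at heq
        exact finSub_right_inj heq
  funext i
  have := key (i : ℕ) i.isLt
  simpa using this

lemma countWords (k m : ℕ) (hk : 2 ≤ k) (A : Finset (Fin m)) :
    ((univ : Finset (Fin (m + 1) → Fin k)).filter
      (fun w => ∀ i ∈ A, w i.castSucc ≠ w i.succ)).card
    = (k - 1) ^ A.card * k ^ (m + 1 - A.card) := by
  haveI : NeZero k := ⟨by omega⟩
  have hDbij : Function.Bijective (Dmap k m) :=
    Finite.injective_iff_bijective.mp (Dmap_inj k m)
  have hpred : ∀ w : Fin (m + 1) → Fin k,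
      (∀ i ∈ A, w i.castSucc ≠ w i.succ) ↔ (∀ i ∈ A, Dmap k m w i.succ ≠ 0) := by
    intro w
    refine forall₂_congr (fun i hi => ?_)
    rw [Dmap_succ]
    constructor
    · intro h h0; exact h ((finSub_eq_zero_iff _ _).mp h0).symm
    · intro h h0; exact h ((finSub_eq_zero_iff _ _).mpr h0.symm)
  have hcard : ((univ : Finset (Fin (m + 1) → Fin k)).filter
      (fun w => ∀ i ∈ A, w i.castSucc ≠ w i.succ)).card
      = ((univ : Finset (Fin (m + 1) → Fin k)).filter
      (fun d => ∀ i ∈ A, d i.succ ≠ 0)).card := by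
    apply Finset.card_bij (fun w _ => Dmap k m w)
    · intro w hw
      simp only [mem_filter, mem_univ, true_and] at hw ⊢
      exact (hpred w).mp hw
    · intro w hw w' hw' h
      exact Dmap_inj k m h
    · intro d hd
      simp only [mem_filter, mem_univ, true_and] at hd
      obtain ⟨w, rfl⟩ := hDbij.2 d
      exact ⟨w, by simp only [mem_filter, mem_univ, true_and]; exact (hpred w).mpr hd, rfl⟩
  rw [hcard]
  set B : Finset (Fin (m + 1)) := A.image Fin.succ with hB
  have hBcard : B.card = A.card := Finset.card_image_of_injective _ (Fin.succ_injective m)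
  have hpred2 : ∀ d : Fin (m + 1) → Fin k,
      (∀ i ∈ A, d i.succ ≠ 0) ↔ ∀ t : Fin (m + 1), t ∈ B → d t ≠ 0 := by
    intro d
    constructor
    · intro h t ht
      obtain ⟨i, hi, rfl⟩ := Finset.mem_image.mp ht
      exact h i hi
    · intro h i hi
      exact h i.succ (Finset.mem_image_of_mem _ hi)
  rw [Finset.filter_congr (fun d _ => by rw [hpred2 d])]
  rw [← Fintype.card_subtype]
  have := Fintype.card_congr
    (Equiv.subtypePiEquivPi (β := fun _ : Fin (m+1) => Fin k)
      (p := fun t x => t ∈ B → x ≠ 0))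
  rw [this, Fintype.card_pi]
  have hfac : ∀ t : Fin (m + 1),
      Fintype.card {x : Fin k // t ∈ B → x ≠ 0} = if t ∈ B then k - 1 else k := by
    intro t
    by_cases ht : t ∈ B
    · rw [if_pos ht]
      rw [Fintype.card_congr (Equiv.subtypeEquivRight
        (q := fun x : Fin k => ¬ x = 0) (fun x => by simp [ht]))]
      rw [Fintype.card_subtype_compl (p := fun x : Fin k => x = 0)]
      simp [Fintype.card_subtype_eq]
    · rw [if_neg ht]
      rw [Fintype.card_congr (Equiv.subtypeUnivEquiv (fun x h => absurd h ht))]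
      simp
  rw [Finset.prod_congr rfl (fun t _ => hfac t)]
  rw [← Finset.prod_mul_prod_compl B]
  rw [Finset.prod_congr rfl (fun t ht => if_pos ht),
    Finset.prod_congr rfl (fun t ht => if_neg (Finset.mem_compl.mp ht))]
  rw [Finset.prod_const, Finset.prod_const, Finset.card_compl, Fintype.card_fin, hBcard]

section AuxB
variable {m : ℕ}

def ascF (σ : Equiv.Perm (Fin (m + 1))) : Finset (Fin m) :=
  univ.filter fun i => σ i.castSucc < σ i.succ

def eqEdges (j : ℕ) (f : Fin (m + 1) → Fin j) : Finset (Fin m) :=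
  univ.filter fun i => f (Tuple.sort f i.castSucc) = f (Tuple.sort f i.succ)

/-- forward map -/
def fwdF (σ : Equiv.Perm (Fin (m + 1))) (S : Finset (Fin m)) (j : ℕ)
    (hj : m - S.card < j) : Fin (m + 1) → Fin j :=
  fun x => ⟨cnt S ((σ.symm x : Fin (m + 1)) : ℕ), lt_of_le_of_lt (cnt_le S _) hj⟩

lemma fwdF_apply_sort (σ : Equiv.Perm (Fin (m + 1))) (S : Finset (Fin m)) (j : ℕ)
    (hj : m - S.card < j) (i : Fin (m + 1)) :
    fwdF σ S j hj (σ i) = ⟨cnt S (i : ℕ), lt_of_le_of_lt (cnt_le S _) hj⟩ := by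
  unfold fwdF
  simp

lemma fwdF_surj (σ : Equiv.Perm (Fin (m + 1))) (S : Finset (Fin m)) (j : ℕ)
    (hj : m - S.card < j) (hj' : j ≤ m - S.card + 1) :
    Function.Surjective (fwdF σ S j hj) := by
  intro v
  have hv : (v : ℕ) ≤ cnt S m := by
    rw [cnt_top S m le_rfl]; omega
  obtain ⟨t, htm, ht⟩ := natIVT (cnt S) (cnt_zero S) (cnt_succ_le S) m (v : ℕ) hv
  refine ⟨σ ⟨t, by omega⟩, ?_⟩
  rw [fwdF_apply_sort]
  exact Fin.ext (by simpa using ht)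

lemma sort_fwdF (σ : Equiv.Perm (Fin (m + 1))) (S : Finset (Fin m)) (j : ℕ)
    (hj : m - S.card < j) (hS : S ⊆ ascF σ) :
    Tuple.sort (fwdF σ S j hj) = σ := by
  symm
  rw [Tuple.eq_sort_iff]
  constructor
  · intro a b hab
    simp only [Function.comp_apply, fwdF_apply_sort]
    exact cnt_mono S hab
  · intro a b hab heq
    rw [fwdF_apply_sort, fwdF_apply_sort] at heq
    have hcnt : cnt S (a : ℕ) = cnt S (b : ℕ) := congrArg Fin.val heq
    have hedges : ∀ t : Fin m, (a : ℕ) ≤ (t : ℕ) → (t : ℕ) < (b : ℕ) →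
        σ t.castSucc < σ t.succ := by
      intro t h1 h2
      have htS : t ∈ S := by
        by_contra htS
        have h3 := cnt_succ S t
        rw [if_neg htS] at h3
        have h4 : cnt S (a : ℕ) ≤ cnt S (t : ℕ) := cnt_mono S h1
        have h5 : cnt S ((t : ℕ) + 1) ≤ cnt S (b : ℕ) := cnt_mono S (by omega)
        omega
      have := hS htS
      simp only [ascF, mem_filter, mem_univ, true_and] at this
      exact this
    have := chain σ (a : ℕ) (b : ℕ) hab (by omega) hedges
    simpa using this

-- properties of backward map
section bwd
variable (j : ℕ) (f : Fin (m + 1) → Fin j)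

lemma sort_zero (hf : Function.Surjective f) (hj : 0 < j) : ((f (Tuple.sort f 0)) : ℕ) = 0 := by
  obtain ⟨x, hx⟩ := hf ⟨0, hj⟩
  have hmono := Tuple.monotone_sort f
  have h1 : f (Tuple.sort f 0) ≤ f (Tuple.sort f ((Tuple.sort f).symm x)) :=
    hmono (Fin.zero_le _)
  simp only [Equiv.apply_symm_apply, hx] at h1
  exact Nat.le_zero.mp h1

lemma sort_unit_step (hf : Function.Surjective f) (i : Fin m) :
    ((f (Tuple.sort f i.succ)) : ℕ) ≤ ((f (Tuple.sort f i.castSucc)) : ℕ) + 1 := by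
  by_contra hcon
  push_neg at hcon
  set v : ℕ := ((f (Tuple.sort f i.castSucc)) : ℕ) + 1 with hv
  have hvj : v < j := lt_trans (by omega) (f (Tuple.sort f i.succ)).isLt
  obtain ⟨x, hx⟩ := hf ⟨v, hvj⟩
  set t := (Tuple.sort f).symm x with hts
  have hxt : f (Tuple.sort f t) = ⟨v, hvj⟩ := by rw [hts]; simp [hx]
  have hmono := Tuple.monotone_sort f
  rcases le_or_gt t i.castSucc with h | h
  · have := hmono h
    simp only [Function.comp_apply, hxt] at this
    have : v ≤ ((f (Tuple.sort f i.castSucc)) : ℕ) := this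
    omega
  · have h2 : i.succ ≤ t := by
      rw [Fin.le_def]; rw [Fin.lt_def] at h
      simp only [Fin.val_succ, Fin.coe_castSucc] at h ⊢
      omega
    have := hmono h2
    simp only [Function.comp_apply, hxt] at this
    have : ((f (Tuple.sort f i.succ)) : ℕ) ≤ v := this
    omega

lemma sort_prefix (hf : Function.Surjective f) (hj : 0 < j) (i : Fin (m + 1)) :
    ((f (Tuple.sort f i)) : ℕ) = cnt (eqEdges j f) i.1 := by
  induction i using Fin.induction with
  | zero => rw [sort_zero j f hf hj]; exact (cnt_zero _).symm
  | succ i ih =>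
    have hcc : cnt (eqEdges j f) ((i.castSucc : Fin (m + 1)) : ℕ) = cnt (eqEdges j f) (i : ℕ) := rfl
    have hsc : ((i.succ : Fin (m + 1)) : ℕ) = (i : ℕ) + 1 := rfl
    rw [hsc, cnt_succ]
    by_cases hiS : i ∈ eqEdges j f
    · have heq : f (Tuple.sort f i.castSucc) = f (Tuple.sort f i.succ) := by
        have := hiS; simp only [eqEdges, mem_filter, mem_univ, true_and] at this; exact this
      have hval : ((f (Tuple.sort f i.castSucc)) : ℕ) = ((f (Tuple.sort f i.succ)) : ℕ) :=
        congrArg Fin.val heq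
      rw [if_pos hiS]
      omega
    · have hne : f (Tuple.sort f i.castSucc) ≠ f (Tuple.sort f i.succ) := by
        intro hcon
        exact hiS (by simp only [eqEdges, mem_filter, mem_univ, true_and]; exact hcon)
      have hle : f (Tuple.sort f i.castSucc) ≤ f (Tuple.sort f i.succ) :=
        Tuple.monotone_sort f (le_of_lt (Fin.castSucc_lt_succ (i := i)))
      have hlt : ((f (Tuple.sort f i.castSucc)) : ℕ) < ((f (Tuple.sort f i.succ)) : ℕ) :=
        lt_of_le_of_ne hle (fun h => hne (Fin.ext (by exact_mod_cast h)))
      have hstep := sort_unit_step j f hf i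
      rw [if_neg hiS]
      omega

lemma sort_last (hf : Function.Surjective f) (hj : 0 < j) :
    ((f (Tuple.sort f ⟨m, by omega⟩)) : ℕ) = j - 1 := by
  obtain ⟨x, hx⟩ := hf ⟨j - 1, by omega⟩
  have hmono := Tuple.monotone_sort f
  have h1 : f (Tuple.sort f ((Tuple.sort f).symm x)) ≤ f (Tuple.sort f ⟨m, by omega⟩) :=
    hmono (by rw [Fin.le_def]; exact Nat.lt_succ_iff.mp ((Tuple.sort f).symm x).isLt)
  simp only [Equiv.apply_symm_apply, hx] at h1
  have h2 : j - 1 ≤ ((f (Tuple.sort f ⟨m, by omega⟩)) : ℕ) := h1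
  have h3 := (f (Tuple.sort f ⟨m, by omega⟩)).isLt
  omega

lemma eqEdges_card (hf : Function.Surjective f) (s : ℕ) (hs : s ≤ m) (hjs : j = m + 1 - s) :
    (eqEdges j f).card = s := by
  have hj : 0 < j := by omega
  have h1 := sort_prefix j f hf hj ⟨m, by omega⟩
  rw [sort_last j f hf hj] at h1
  rw [cnt_top _ m le_rfl] at h1
  have h2 : (eqEdges j f).card ≤ m := by
    simpa using Finset.card_le_univ (eqEdges j f)
  omega

lemma eqEdges_subset_asc : eqEdges j f ⊆ ascF (Tuple.sort f) := by
  intro i hi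
  simp only [eqEdges, mem_filter, mem_univ, true_and] at hi
  simp only [ascF, mem_filter, mem_univ, true_and]
  exact (Tuple.eq_sort_iff.mp rfl).2 i.castSucc i.succ (Fin.castSucc_lt_succ (i := i)) hi


lemma eqEdges_fwdF (σ : Equiv.Perm (Fin (m + 1))) (S : Finset (Fin m)) (j : ℕ)
    (hj : m - S.card < j) (hS : S ⊆ ascF σ) :
    eqEdges j (fwdF σ S j hj) = S := by
  ext i
  simp only [eqEdges, mem_filter, mem_univ, true_and]
  rw [sort_fwdF σ S j hj hS, fwdF_apply_sort, fwdF_apply_sort, Fin.mk.injEq]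
  have h1 := cnt_succ S i
  have hcc : cnt S ((i.castSucc : Fin (m + 1)) : ℕ) = cnt S (i : ℕ) := rfl
  have hsc : ((i.succ : Fin (m + 1)) : ℕ) = (i : ℕ) + 1 := rfl
  rw [hsc]
  by_cases hiS : i ∈ S
  · rw [if_pos hiS] at h1
    simp only [hiS, iff_true]
    omega
  · rw [if_neg hiS] at h1
    simp only [hiS, iff_false]
    omega

lemma fwdF_eqEdges (j : ℕ) (f : Fin (m + 1) → Fin j) (hf : Function.Surjective f)
    (hj0 : 0 < j) (hj : m - (eqEdges j f).card < j) :
    fwdF (Tuple.sort f) (eqEdges j f) j hj = f := by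
  funext x
  apply Fin.ext
  show cnt (eqEdges j f) (((Tuple.sort f).symm x : Fin (m + 1)) : ℕ) = (f x : ℕ)
  rw [← sort_prefix j f hf hj0 ((Tuple.sort f).symm x), Equiv.apply_symm_apply]

lemma surjCount (s : ℕ) (hs : s ≤ m) :
    ((univ : Finset (Equiv.Perm (Fin (m + 1)))).sigma
        (fun σ => (ascF σ).powersetCard s)).card
      = Surj (m + 1) (m + 1 - s) := by
  unfold Surj
  have hmem : ∀ p : Σ _ : Equiv.Perm (Fin (m + 1)), Finset (Fin m),
      p ∈ (univ : Finset (Equiv.Perm (Fin (m + 1)))).sigma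
        (fun σ => (ascF σ).powersetCard s) ↔ p.2 ⊆ ascF p.1 ∧ p.2.card = s := by
    intro p
    rw [Finset.mem_sigma, Finset.mem_powersetCard]
    simp
  refine Finset.card_bij'
    (i := fun p hp => fwdF p.1 p.2 (m + 1 - s)
      (by rw [((hmem p).mp hp).2]; omega))
    (j := fun f hf => ⟨Tuple.sort f, eqEdges (m + 1 - s) f⟩) ?_ ?_ ?_ ?_
  · intro p hp
    simp only [mem_filter, mem_univ, true_and]
    apply fwdF_surj
    rw [((hmem p).mp hp).2]; omega
  · intro f hf
    simp only [mem_filter, mem_univ, true_and] at hf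
    rw [hmem]
    exact ⟨eqEdges_subset_asc _ f, eqEdges_card _ f hf s hs rfl⟩
  · intro p hp
    obtain ⟨hsub, hcard⟩ := (hmem p).mp hp
    obtain ⟨σ, S⟩ := p
    simp only at hsub hcard ⊢
    rw [sort_fwdF σ S _ _ hsub, eqEdges_fwdF σ S _ _ hsub]
  · intro f hf
    simp only [mem_filter, mem_univ, true_and] at hf
    simp only
    rw [fwdF_eqEdges _ f hf (by omega)]

end bwd
end AuxB

theorem statement17 (k n : ℕ) (hk : 2 ≤ k) (hn : 1 ≤ n) :
    (((Finset.univ : Finset (Equiv.Perm (Fin n) × (Fin n → Fin k))).filter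
        (fun sw => ¬ ∃ p : Fin n × Fin n, (p.2 : ℕ) = (p.1 : ℕ) + 1 ∧
          sw.1 p.1 < sw.1 p.2 ∧ sw.2 p.1 = sw.2 p.2)).card : ℤ)
      = ∑ j ∈ Finset.Icc 1 n, (-1 : ℤ) ^ (n - j) * (Surj n j : ℤ) * (k : ℤ) ^ j := by
  obtain ⟨m, rfl⟩ : ∃ m, n = m + 1 := ⟨n - 1, by omega⟩
  -- Step 1: rewrite predicate
  have hpred : ∀ sw : Equiv.Perm (Fin (m + 1)) × (Fin (m + 1) → Fin k),
      (¬ ∃ p : Fin (m + 1) × Fin (m + 1), (p.2 : ℕ) = (p.1 : ℕ) + 1 ∧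
        sw.1 p.1 < sw.1 p.2 ∧ sw.2 p.1 = sw.2 p.2)
      ↔ ∀ i ∈ ascF sw.1, sw.2 i.castSucc ≠ sw.2 i.succ := by
    intro sw
    constructor
    · intro h i hi hw
      simp only [ascF, mem_filter, mem_univ, true_and] at hi
      exact h ⟨(i.castSucc, i.succ), rfl, hi, hw⟩
    · rintro h ⟨⟨p1, p2⟩, hp, hlt, heqw⟩
      simp only at hp hlt heqw
      have hp1 : (p1 : ℕ) < m := by have := p2.isLt; omega
      set i : Fin m := ⟨(p1 : ℕ), hp1⟩ with hi
      have h1 : i.castSucc = p1 := Fin.ext rfl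
      have h2 : i.succ = p2 := Fin.ext (by simp [hi, Fin.val_succ]; omega)
      refine h i ?_ ?_
      · simp only [ascF, mem_filter, mem_univ, true_and, h1, h2]
        exact hlt
      · rw [h1, h2]
        exact heqw
  rw [Finset.filter_congr (fun sw _ => by rw [hpred sw])]
  -- Step 2: fiberwise over the permutation
  rw [Finset.card_eq_sum_card_fiberwise
    (f := fun sw : Equiv.Perm (Fin (m + 1)) × (Fin (m + 1) → Fin k) => sw.1)
    (t := univ) (fun x _ => mem_univ _)]
  have hfiber : ∀ σ : Equiv.Perm (Fin (m + 1)),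
      ((univ.filter (fun sw : Equiv.Perm (Fin (m + 1)) × (Fin (m + 1) → Fin k) =>
          ∀ i ∈ ascF sw.1, sw.2 i.castSucc ≠ sw.2 i.succ)).filter
        (fun sw => sw.1 = σ)).card
      = ((univ : Finset (Fin (m + 1) → Fin k)).filter
          (fun w => ∀ i ∈ ascF σ, w i.castSucc ≠ w i.succ)).card := by
    intro σ
    refine Finset.card_bij' (i := fun sw _ => sw.2) (j := fun w _ => (σ, w)) ?_ ?_ ?_ ?_
    · intro sw hsw
      simp only [mem_filter, mem_univ, true_and] at hsw ⊢
      rw [← hsw.2]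
      exact hsw.1
    · intro w hw
      simp only [mem_filter, mem_univ, true_and] at hw ⊢
      exact ⟨hw, trivial⟩
    · intro sw hsw
      simp only [mem_filter] at hsw
      exact Prod.ext hsw.2.symm rfl
    · intro w hw
      rfl
  rw [Finset.sum_congr rfl (fun σ _ => (hfiber σ).trans (countWords k m hk (ascF σ)))]
  -- Step 3: algebra
  have hasc_le : ∀ σ : Equiv.Perm (Fin (m + 1)), (ascF σ).card ≤ m := by
    intro σ
    simpa using Finset.card_le_univ (ascF σ)
  push_cast [Nat.cast_sub (show 1 ≤ k by omega)]
  have hexp : ∀ a : ℕ, a ≤ m →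
      ((k : ℤ) - 1) ^ a * (k : ℤ) ^ (m + 1 - a)
        = ∑ s ∈ Finset.range (m + 1), (-1 : ℤ) ^ s * (a.choose s : ℤ) * (k : ℤ) ^ (m + 1 - s) := by
    intro a ha
    have h1 : ((k : ℤ) - 1) ^ a
        = ∑ s ∈ Finset.range (a + 1), (-1 : ℤ) ^ s * (k : ℤ) ^ (a - s) * (a.choose s : ℤ) := by
      have := add_pow (-1 : ℤ) (k : ℤ) a
      rw [show (-1 : ℤ) + (k : ℤ) = (k : ℤ) - 1 by ring] at this
      exact this
    rw [h1, Finset.sum_mul]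
    rw [Finset.sum_subset (Finset.range_subset_range.mpr (by omega : a + 1 ≤ m + 1))
      (fun s _ hs => by
        rw [Nat.choose_eq_zero_of_lt (by simp only [Finset.mem_range] at hs ⊢; omega)]
        push_cast; ring)]
    refine Finset.sum_congr rfl (fun s hs => ?_)
    simp only [Finset.mem_range] at hs
    rcases Nat.lt_or_ge s (a + 1) with h | h
    · have : (k : ℤ) ^ (a - s) * (k : ℤ) ^ (m + 1 - a) = (k : ℤ) ^ (m + 1 - s) := by
        rw [← pow_add]
        congr 1
        omega
      calc (-1 : ℤ) ^ s * (k : ℤ) ^ (a - s) * (a.choose s : ℤ) * (k : ℤ) ^ (m + 1 - a)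
          = (-1 : ℤ) ^ s * (a.choose s : ℤ) * ((k : ℤ) ^ (a - s) * (k : ℤ) ^ (m + 1 - a)) := by ring
        _ = _ := by rw [this]
    · rw [Nat.choose_eq_zero_of_lt (by omega)]
      push_cast; ring
  rw [Finset.sum_congr rfl (fun σ _ => hexp (ascF σ).card (hasc_le σ))]
  rw [Finset.sum_comm]
  -- Step 4: inner sum is Surj
  have hinner : ∀ s : ℕ, s ∈ Finset.range (m + 1) →
      (∑ σ : Equiv.Perm (Fin (m + 1)),
        (-1 : ℤ) ^ s * ((ascF σ).card.choose s : ℤ) * (k : ℤ) ^ (m + 1 - s))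
      = (-1 : ℤ) ^ s * (Surj (m + 1) (m + 1 - s) : ℤ) * (k : ℤ) ^ (m + 1 - s) := by
    intro s hs
    simp only [Finset.mem_range] at hs
    have h1 : (∑ σ : Equiv.Perm (Fin (m + 1)), ((ascF σ).card.choose s : ℤ))
        = (Surj (m + 1) (m + 1 - s) : ℤ) := by
      rw [← Nat.cast_sum]
      congr 1
      rw [Finset.sum_congr rfl
        (fun σ _ => ((Finset.card_powersetCard s (ascF σ)).symm : (ascF σ).card.choose s = _))]
      rw [← Finset.card_sigma]
      exact surjCount s (by omega)
    calc _ = (-1 : ℤ) ^ s * (∑ σ : Equiv.Perm (Fin (m + 1)),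
          ((ascF σ).card.choose s : ℤ)) * (k : ℤ) ^ (m + 1 - s) := by
          rw [Finset.mul_sum, Finset.sum_mul]
      _ = _ := by rw [h1]
  rw [Finset.sum_congr rfl hinner]
  -- Step 5: reindex
  refine Finset.sum_bij' (i := fun s _ => m + 1 - s) (j := fun j _ => m + 1 - j) ?_ ?_ ?_ ?_ ?_
  · intro s hs
    simp only [Finset.mem_range] at hs
    simp only [Finset.mem_Icc]
    omega
  · intro j hj
    simp only [Finset.mem_Icc] at hj
    simp only [Finset.mem_range]
    omega
  · intro s hs
    simp only [Finset.mem_range] at hs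
    show m + 1 - (m + 1 - s) = s
    omega
  · intro j hj
    simp only [Finset.mem_Icc] at hj
    show m + 1 - (m + 1 - j) = j
    omega
  · intro s hs
    simp only [Finset.mem_range] at hs
    have h1 : m + 1 - (m + 1 - s) = s := by omega
    rw [h1]
end

section
/- For all integers k ≥ 2 and n ≥ 1, the number of pairs (σ,w) ∈ C_k≀S_n such that there is no index i with 1 ≤ i ≤ n−1, σ_i < σ_{i+1} and w_i ≠ w_{i+1} equals Σ_{σ ∈ S_n} k^{des(σ)+1}, where des(σ) = #{i : 1 ≤ i ≤ n−1, σ_i > σ_{i+1}} is the number of descents of σ. -/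
open Finset
open scoped Classical

/-- The number of descents of a permutation `σ` of `{1,…,n}`. -/
def des {n : ℕ} (σ : Equiv.Perm (Fin n)) : ℕ :=
  ((Finset.univ : Finset (Fin n × Fin n)).filter
    (fun p => (p.2 : ℕ) = (p.1 : ℕ) + 1 ∧ σ p.2 < σ p.1)).card

namespace Stmt18

variable {n : ℕ}

/-- The descent pairs of σ. -/
noncomputable def dset (σ : Equiv.Perm (Fin n)) : Finset (Fin n × Fin n) :=
  ((Finset.univ : Finset (Fin n × Fin n)).filter
    (fun p => (p.2 : ℕ) = (p.1 : ℕ) + 1 ∧ σ p.2 < σ p.1))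

/-- Run starts: 0 together with positions immediately after a descent. -/
noncomputable def D (σ : Equiv.Perm (Fin n)) (hn : 1 ≤ n) : Finset (Fin n) :=
  insert ⟨0, hn⟩ ((dset σ).image Prod.snd)

lemma card_D (σ : Equiv.Perm (Fin n)) (hn : 1 ≤ n) : (D σ hn).card = des σ + 1 := by
  rw [D, Finset.card_insert_of_notMem, Finset.card_image_of_injOn]
  · rfl
  · intro p hp q hq h
    simp only [dset, Finset.mem_coe, Finset.mem_filter] at hp hq
    have h1 : (p.1 : ℕ) = (q.1 : ℕ) := by
      have := hp.2.1; have := hq.2.1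
      rw [h] at *
      omega
    exact Prod.ext (Fin.ext h1) h
  · intro hmem
    rcases Finset.mem_image.1 hmem with ⟨p, hp, hp2⟩
    simp only [dset, Finset.mem_filter] at hp
    have := hp.2.1
    rw [hp2] at this
    simp at this

lemma zero_mem_D (σ : Equiv.Perm (Fin n)) (hn : 1 ≤ n) : (⟨0, hn⟩ : Fin n) ∈ D σ hn :=
  Finset.mem_insert_self _ _

lemma filter_nonempty (σ : Equiv.Perm (Fin n)) (hn : 1 ≤ n) (i : Fin n) :
    ((D σ hn).filter (· ≤ i)).Nonempty :=
  ⟨⟨0, hn⟩, Finset.mem_filter.2 ⟨zero_mem_D σ hn, by simp [Fin.le_def]⟩⟩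

/-- The start of the run containing `i`: the largest run start `≤ i`. -/
noncomputable def start (σ : Equiv.Perm (Fin n)) (hn : 1 ≤ n) (i : Fin n) : Fin n :=
  ((D σ hn).filter (· ≤ i)).max' (filter_nonempty σ hn i)

lemma start_mem (σ : Equiv.Perm (Fin n)) (hn : 1 ≤ n) (i : Fin n) :
    start σ hn i ∈ D σ hn := by
  have h := Finset.max'_mem ((D σ hn).filter (· ≤ i)) (filter_nonempty σ hn i)
  exact (Finset.mem_filter.1 h).1

lemma start_le (σ : Equiv.Perm (Fin n)) (hn : 1 ≤ n) (i : Fin n) :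
    start σ hn i ≤ i := by
  have h := Finset.max'_mem ((D σ hn).filter (· ≤ i)) (filter_nonempty σ hn i)
  exact (Finset.mem_filter.1 h).2

set_option maxHeartbeats 1000000 in
lemma start_of_mem (σ : Equiv.Perm (Fin n)) (hn : 1 ≤ n) {i : Fin n} (hi : i ∈ D σ hn) :
    start σ hn i = i := by
  have h2 : i ≤ start σ hn i :=
    Finset.le_max' ((D σ hn).filter (· ≤ i)) i (Finset.mem_filter.2 ⟨hi, le_refl i⟩)
  exact le_antisymm (start_le σ hn i) h2

lemma start_step (σ : Equiv.Perm (Fin n)) (hn : 1 ≤ n) {i j : Fin n}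
    (hij : (i : ℕ) = (j : ℕ) + 1) (hi : i ∉ D σ hn) :
    start σ hn i = start σ hn j := by
  have hset : (D σ hn).filter (· ≤ i) = (D σ hn).filter (· ≤ j) := by
    apply Finset.filter_congr
    intro d hd
    simp only [Fin.le_def]
    constructor
    · intro hdi
      have : d ≠ i := fun h => hi (h ▸ hd)
      have : (d : ℕ) ≠ (i : ℕ) := fun h => this (Fin.ext h)
      omega
    · intro hdj; omega
  unfold start
  congr 1

lemma ascent_of_not_mem (σ : Equiv.Perm (Fin n)) (hn : 1 ≤ n) {i j : Fin n}
    (hij : (i : ℕ) = (j : ℕ) + 1) (hi : i ∉ D σ hn) : σ j < σ i := by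
  rcases lt_trichotomy (σ j) (σ i) with h | h | h
  · exact h
  · exact absurd (σ.injective h) (fun hji : j = i => by rw [hji] at hij; omega)
  · exact absurd (Finset.mem_insert_of_mem (Finset.mem_image.2
      ⟨(j, i), Finset.mem_filter.2 ⟨Finset.mem_univ _, hij, h⟩, rfl⟩)) hi

/-- A valid coloring is constant on runs. -/
lemma w_eq_start {k : ℕ} (σ : Equiv.Perm (Fin n)) (hn : 1 ≤ n) (w : Fin n → Fin k)
    (hw : ¬ ∃ p : Fin n × Fin n, (p.2 : ℕ) = (p.1 : ℕ) + 1 ∧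
      σ p.1 < σ p.2 ∧ w p.1 ≠ w p.2) :
    ∀ m : ℕ, ∀ i : Fin n, (i : ℕ) = m → w i = w (start σ hn i) := by
  push_neg at hw
  intro m
  induction m with
  | zero =>
    intro i hi
    have : i ∈ D σ hn := by
      have : i = ⟨0, hn⟩ := Fin.ext hi
      rw [this]; exact zero_mem_D σ hn
    rw [start_of_mem σ hn this]
  | succ m ih =>
    intro i hi
    by_cases hm : i ∈ D σ hn
    · rw [start_of_mem σ hn hm]
    · have hmn : m < n := by omega
      set j : Fin n := ⟨m, hmn⟩ with hj
      have hij : (i : ℕ) = (j : ℕ) + 1 := hi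
      have hasc : σ j < σ i := ascent_of_not_mem σ hn hij hm
      have hwj : w j = w i := hw (j, i) hij hasc
      rw [start_step σ hn hij hm, ← hwj]
      exact ih j rfl

lemma count_w {k : ℕ} (σ : Equiv.Perm (Fin n)) (hn : 1 ≤ n) :
    ((Finset.univ : Finset (Fin n → Fin k)).filter
      (fun w => ¬ ∃ p : Fin n × Fin n, (p.2 : ℕ) = (p.1 : ℕ) + 1 ∧
        σ p.1 < σ p.2 ∧ w p.1 ≠ w p.2)).card = k ^ (des σ + 1) := by
  have hcard : ((Finset.univ : Finset ({x // x ∈ D σ hn} → Fin k))).card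
      = k ^ (des σ + 1) := by
    rw [Finset.card_univ, Fintype.card_fun, Fintype.card_fin, Fintype.card_coe,
      card_D σ hn]
  rw [← hcard]
  apply Finset.card_bij' (fun w _ => fun d : {x // x ∈ D σ hn} => w d.1)
    (fun f _ => fun i => f ⟨start σ hn i, start_mem σ hn i⟩)
  · intro w hw
    exact Finset.mem_univ _
  · -- the inverse lands in the filter
    intro f _
    simp only [Finset.mem_filter, Finset.mem_univ, true_and]
    rintro ⟨p, hp1, hp2, hp3⟩
    apply hp3
    have hpD : p.2 ∉ D σ hn := by
      intro hmem
      rcases Finset.mem_insert.1 hmem with h0 | him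
      · rw [h0] at hp1; simp at hp1
      · rcases Finset.mem_image.1 him with ⟨q, hq, hq2⟩
        simp only [dset, Finset.mem_filter] at hq
        have : q.1 = p.1 := by
          apply Fin.ext
          have := hq.2.1; rw [hq2] at this; omega
        rw [this, hq2] at hq
        exact absurd hq.2.2 (not_lt.2 (le_of_lt hp2))
    congr 1
    exact Subtype.ext (start_step σ hn hp1 hpD).symm
  · -- left inverse
    intro w hw
    funext i
    exact (w_eq_start σ hn w (Finset.mem_filter.1 hw).2 i.1 i rfl).symm
  · -- right inverse
    intro f _
    funext d
    have hd : (⟨start σ hn d.1, start_mem σ hn d.1⟩ : {x // x ∈ D σ hn}) = d :=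
      Subtype.ext (start_of_mem σ hn d.2)
    show f ⟨start σ hn d.1, start_mem σ hn d.1⟩ = f d
    rw [hd]

end Stmt18

theorem statement18 (k n : ℕ) (hk : 2 ≤ k) (hn : 1 ≤ n) :
    ((Finset.univ : Finset (Equiv.Perm (Fin n) × (Fin n → Fin k))).filter
        (fun sw => ¬ ∃ p : Fin n × Fin n, (p.2 : ℕ) = (p.1 : ℕ) + 1 ∧
          sw.1 p.1 < sw.1 p.2 ∧ sw.2 p.1 ≠ sw.2 p.2)).card
      = ∑ σ : Equiv.Perm (Fin n), k ^ (des σ + 1) := by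
  rw [Finset.card_eq_sum_card_fiberwise
    (f := Prod.fst) (t := (Finset.univ : Finset (Equiv.Perm (Fin n))))
    (fun x _ => Finset.mem_univ _)]
  refine Finset.sum_congr rfl fun σ _ => ?_
  rw [← Stmt18.count_w σ hn (k := k)]
  apply Finset.card_nbij' (fun sw => sw.2) (fun w => (σ, w))
  · intro sw hsw
    rw [Finset.mem_coe, Finset.mem_filter] at hsw
    obtain ⟨h1, h2⟩ := hsw
    rw [Finset.mem_filter] at h1; rw [Finset.mem_coe, Finset.mem_filter]
    refine ⟨Finset.mem_univ _, ?_⟩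
    rw [← h2]
    exact h1.2
  · intro w hw
    rw [Finset.mem_coe, Finset.mem_filter] at hw
    rw [Finset.mem_coe, Finset.mem_filter, Finset.mem_filter]
    exact ⟨⟨Finset.mem_univ _, hw.2⟩, rfl⟩
  · intro sw hsw
    rw [Finset.mem_coe, Finset.mem_filter] at hsw
    rw [← hsw.2]
  · intro w _
    rfl
end

section
/- For all integers k ≥ 2 and n ≥ 1, the number of pairs (σ,w) ∈ C_k≀S_n such that there is no index i with 1 ≤ i ≤ n−1, σ_i < σ_{i+1} and w_i ≤ w_{i+1} (i.e. ris(σ,w) = 0) equals Σ (−1)^{n−ℓ} · (n!/(b_1!⋯b_ℓ!)) · Π_{i=1}^{ℓ} binom(b_i + k − 1, b_i), the sum taken over all compositions (b_1, …, b_ℓ) of n (sequences of positive integers with b_1 + … + b_ℓ = n). -/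
open Finset
open scoped Classical


/-- Monotonicity from adjacent comparisons on `Fin b`. -/
lemma aux_monotone_of_adjacent {b : ℕ} {α : Type*} [Preorder α] (f : Fin b → α)
    (h : ∀ (a : ℕ) (h1 : a + 1 < b), f ⟨a, by omega⟩ ≤ f ⟨a + 1, h1⟩) : Monotone f := by
  intro ⟨u, hu⟩ ⟨v, hv⟩ huv
  rw [Fin.mk_le_mk] at huv
  obtain ⟨d, rfl⟩ := Nat.exists_eq_add_of_le huv
  clear huv
  induction d with
  | zero => exact le_rfl
  | succ d ih =>
      refine le_trans (ih (by omega)) ?_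
      exact h (u + d) (by omega)

/-- Gap estimate for strictly monotone maps from `Fin b` to `ℕ`. -/
lemma aux_strictMono_gap {b : ℕ} (g : Fin b → ℕ) (hg : StrictMono g) :
    ∀ (d : ℕ) (i j : Fin b), (j : ℕ) = (i : ℕ) + d → g i + d ≤ g j := by
  intro d
  induction d with
  | zero => intro i j hij; have : i = j := Fin.ext (by omega); subst this; omega
  | succ d ih =>
      intro i j hij
      have hj' : (i : ℕ) + d < b := by have := j.2; omega
      have h1 := ih i ⟨(i : ℕ) + d, hj'⟩ rfl
      have h2 : g ⟨(i : ℕ) + d, hj'⟩ < g j := hg (by simp [Fin.lt_def]; omega)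
      omega

/-- The number of strictly monotone maps `Fin b → Fin m` is `m.choose b`. -/
lemma aux_card_strictMono (b m : ℕ) :
    Fintype.card {g : Fin b → Fin m // StrictMono g} = m.choose b := by
  have e : {g : Fin b → Fin m // StrictMono g} ≃ {s : Finset (Fin m) // s.card = b} := by
    refine
      { toFun := fun g => ⟨Finset.univ.image g.1, ?_⟩
        invFun := fun s => ⟨(s.1.orderEmbOfFin s.2 : Fin b → Fin m),
          (s.1.orderEmbOfFin s.2).strictMono⟩
        left_inv := ?_
        right_inv := ?_ }
    · rw [Finset.card_image_of_injective _ g.2.injective, Finset.card_univ, Fintype.card_fin]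
    · rintro ⟨g, hg⟩
      apply Subtype.ext
      exact (Finset.orderEmbOfFin_unique _ (fun i => Finset.mem_image_of_mem _ (mem_univ i)) hg).symm
    · rintro ⟨s, hs⟩
      apply Subtype.ext
      ext x
      simp only [Finset.mem_image, Finset.mem_univ, true_and]
      constructor
      · rintro ⟨i, rfl⟩; exact Finset.orderEmbOfFin_mem s hs i
      · intro hx
        have := Finset.range_orderEmbOfFin s hs
        have hx' : x ∈ Set.range (s.orderEmbOfFin hs) := by rw [this]; exact hx
        obtain ⟨i, hi⟩ := hx'
        exact ⟨i, hi⟩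
  rw [Fintype.card_congr e, Fintype.card_subtype]
  have : Finset.univ.filter (fun s : Finset (Fin m) => s.card = b)
      = Finset.powersetCard b (Finset.univ : Finset (Fin m)) := by
    ext s; simp [Finset.mem_powersetCard_univ]
  rw [this, Finset.card_powersetCard, Finset.card_univ, Fintype.card_fin]

/-- Stars and bars: the number of monotone maps `Fin b → Fin m` (`m ≥ 1`). -/
lemma aux_card_monotone (b m : ℕ) (hm : 1 ≤ m) :
    Fintype.card {f : Fin b → Fin m // Monotone f} = (b + m - 1).choose b := by
  have e : {f : Fin b → Fin m // Monotone f} ≃ {g : Fin b → Fin (m + b - 1) // StrictMono g} := by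
    refine
      { toFun := fun f => ⟨fun i => ⟨f.1 i + i, by have := (f.1 i).2; have := i.2; omega⟩, ?_⟩
        invFun := fun g => ⟨fun i => ⟨g.1 i - i, ?_⟩, ?_⟩
        left_inv := ?_
        right_inv := ?_ }
    · intro i j hij
      have h1 : f.1 i ≤ f.1 j := f.2 hij.le
      have h2 : (i : ℕ) < j := hij
      simp only [Fin.mk_lt_mk]
      have : (f.1 i : ℕ) ≤ f.1 j := h1
      omega
    · -- bound : g.1 i - i < m
      have hb : (0 : ℕ) < b := i.pos
      have hlast := aux_strictMono_gap (fun x => (g.1 x : ℕ))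
        (fun x y hxy => by exact_mod_cast g.2 hxy) (b - 1 - (i : ℕ)) i ⟨b - 1, by omega⟩
        (by simp; omega)
      have := (g.1 ⟨b - 1, by omega⟩).2
      try dsimp only at hlast
      omega
    · -- monotone
      intro i j hij
      have h := aux_strictMono_gap (fun x => (g.1 x : ℕ))
        (fun x y hxy => by exact_mod_cast g.2 hxy) ((j : ℕ) - (i : ℕ)) i j (by omega)
      have hij' : (i : ℕ) ≤ j := hij
      try dsimp only at h
      simp only [Fin.mk_le_mk]
      omega
    · rintro ⟨f, hf⟩
      apply Subtype.ext
      funext i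
      simp
    · rintro ⟨g, hg⟩
      apply Subtype.ext
      funext i
      have hb : (0 : ℕ) < b := i.pos
      have h := aux_strictMono_gap (fun x => (g x : ℕ))
        (fun x y hxy => by exact_mod_cast hg hxy) (i : ℕ) ⟨0, hb⟩ i (by simp)
      try dsimp only at h
      simp only [Fin.ext_iff]
      omega
  rw [Fintype.card_congr e, aux_card_strictMono]
  congr 1
  omega

set_option maxHeartbeats 1000000 in
lemma aux_inclusion_exclusion {α ι : Type*} [Fintype α] [Fintype ι] [DecidableEq ι]
    (P : ι → α → Prop) :
    (((Finset.univ : Finset α).filter fun a => ∀ i, ¬ P i a).card : ℤ)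
      = ∑ S : Finset ι, (-1 : ℤ) ^ S.card *
          (((Finset.univ : Finset α).filter fun a => ∀ i ∈ S, P i a).card : ℤ) := by
  have key : ∀ a : α, ∑ S : Finset ι, (-1 : ℤ) ^ S.card * (if ∀ i ∈ S, P i a then 1 else 0)
      = (if ∀ i, ¬ P i a then 1 else 0) := by
    intro a
    have expand : ∏ i : ι, ((-(if P i a then (1 : ℤ) else 0)) + 1)
        = ∑ S ∈ (Finset.univ : Finset ι).powerset,
            (∏ i ∈ S, (-(if P i a then (1 : ℤ) else 0))) * ∏ i ∈ Finset.univ \ S, 1 :=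
      Finset.prod_add _ _ _
    have lhs_eq : ∏ i : ι, ((-(if P i a then (1 : ℤ) else 0)) + 1)
        = (if ∀ i, ¬ P i a then 1 else 0) := by
      by_cases h : ∀ i, ¬ P i a
      · rw [if_pos h]
        apply Finset.prod_eq_one
        intro i _
        rw [if_neg (h i)]; ring
      · rw [if_neg h]
        push_neg at h
        obtain ⟨i, hi⟩ := h
        apply Finset.prod_eq_zero (Finset.mem_univ i)
        rw [if_pos hi]; ring
    have term_eq : ∀ S : Finset ι, (∏ i ∈ S, (-(if P i a then (1 : ℤ) else 0)))
        = (-1 : ℤ) ^ S.card * (if ∀ i ∈ S, P i a then 1 else 0) := by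
      intro S
      rw [show (fun i => (-(if P i a then (1 : ℤ) else 0))) = fun i =>
        ((-1 : ℤ) * (if P i a then (1 : ℤ) else 0)) from by funext i; ring]
      rw [Finset.prod_mul_distrib, Finset.prod_const]
      congr 1
      by_cases h : ∀ i ∈ S, P i a
      · rw [if_pos h]
        apply Finset.prod_eq_one
        intro i hi
        rw [if_pos (h i hi)]
      · rw [if_neg h]
        push_neg at h
        obtain ⟨i, hi, hPi⟩ := h
        exact Finset.prod_eq_zero hi (by rw [if_neg hPi])
    calc ∑ S : Finset ι, (-1 : ℤ) ^ S.card * (if ∀ i ∈ S, P i a then 1 else 0)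
        = ∑ S ∈ (Finset.univ : Finset ι).powerset,
            (∏ i ∈ S, (-(if P i a then (1 : ℤ) else 0))) * ∏ i ∈ Finset.univ \ S, 1 := by
          rw [Finset.powerset_univ]
          apply Finset.sum_congr rfl
          intro S _
          rw [term_eq S, Finset.prod_const_one, mul_one]
      _ = (if ∀ i, ¬ P i a then 1 else 0) := by rw [← expand, lhs_eq]
  simp only [Finset.card_filter, Nat.cast_sum, Nat.cast_ite, Nat.cast_one, Nat.cast_zero,
    Finset.mul_sum]
  rw [Finset.sum_comm]
  exact Finset.sum_congr rfl fun a _ => (key a).symm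

/-- Permutation of `Fin n` acting within blocks of a composition. -/
def auxBlockPerm {n : ℕ} (c : Composition n) (π : ∀ j, Equiv.Perm (Fin (c.blocksFun j))) :
    Equiv.Perm (Fin n) :=
  c.blocksFinEquiv.symm.trans ((Equiv.sigmaCongrRight π).trans c.blocksFinEquiv)

lemma auxBlockPerm_apply {n : ℕ} (c : Composition n) (π : ∀ j, Equiv.Perm (Fin (c.blocksFun j)))
    (j : Fin c.length) (a : Fin (c.blocksFun j)) :
    auxBlockPerm c π (c.embedding j a) = c.embedding j (π j a) := by
  have h1 : c.blocksFinEquiv.symm (c.embedding j a) = ⟨j, a⟩ := by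
    rw [Equiv.symm_apply_eq]; rfl
  simp only [auxBlockPerm, Equiv.trans_apply, h1, Equiv.sigmaCongrRight_apply]
  rfl

lemma auxBlockPerm_symm_apply {n : ℕ} (c : Composition n)
    (π : ∀ j, Equiv.Perm (Fin (c.blocksFun j))) (j : Fin c.length) (a : Fin (c.blocksFun j)) :
    (auxBlockPerm c π).symm (c.embedding j a) = c.embedding j ((π j)⁻¹ a) := by
  rw [Equiv.symm_apply_eq, auxBlockPerm_apply]
  simp

lemma aux_card_perm (n : ℕ) (c : Composition n) :
    ((Finset.univ : Finset (Equiv.Perm (Fin n))).filter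
      (fun σ => ∀ j : Fin c.length, Monotone fun a => σ (c.embedding j a))).card
      = Nat.multinomial Finset.univ c.blocksFun := by
  set p : Equiv.Perm (Fin n) → Prop :=
    fun σ => ∀ j : Fin c.length, Monotone fun a => σ (c.embedding j a) with hp
  let F : {σ : Equiv.Perm (Fin n) // p σ} × (∀ j, Equiv.Perm (Fin (c.blocksFun j)))
      → Equiv.Perm (Fin n) := fun x => (auxBlockPerm c x.2).trans x.1.1
  have hFapp : ∀ x (y : Fin n), F x y = x.1.1 (auxBlockPerm c x.2 y) := fun x y => rfl
  have hsm : ∀ (σ : {σ : Equiv.Perm (Fin n) // p σ}) (j : Fin c.length),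
      StrictMono fun a => σ.1 (c.embedding j a) := by
    intro σ j
    exact (σ.2 j).strictMono_of_injective
      (σ.1.injective.comp (c.embedding j).injective)
  have hF_inj : Function.Injective F := by
    rintro ⟨σ, π⟩ ⟨σ', π'⟩ h
    have happ : ∀ y, σ.1 (auxBlockPerm c π y) = σ'.1 (auxBlockPerm c π' y) := by
      intro y; exact congrArg (fun e : Equiv.Perm (Fin n) => e y) h
    have hfun : ∀ j, (fun a => σ.1 (c.embedding j a)) ∘ ⇑(π j)
        = (fun a => σ'.1 (c.embedding j a)) ∘ ⇑(π' j) := by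
      intro j
      funext a
      have := happ (c.embedding j a)
      rwa [auxBlockPerm_apply, auxBlockPerm_apply] at this
    have hσeq : ∀ j, (fun a => σ.1 (c.embedding j a)) = fun a => σ'.1 (c.embedding j a) := by
      intro j
      have inst : WellFoundedLT (Fin (c.blocksFun j)) := inferInstance
      refine (@StrictMono.range_inj (Fin (c.blocksFun j)) (Fin n) _ _ inst _ _
        (hsm σ j) (hsm σ' j)).1 ?_
      have r1 : Set.range ((fun a => σ.1 (c.embedding j a)) ∘ ⇑(π j))
          = Set.range (fun a => σ.1 (c.embedding j a)) :=
        Function.Surjective.range_comp (π j).surjective _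
      have r2 : Set.range ((fun a => σ'.1 (c.embedding j a)) ∘ ⇑(π' j))
          = Set.range (fun a => σ'.1 (c.embedding j a)) :=
        Function.Surjective.range_comp (π' j).surjective _
      rw [← r1, ← r2, hfun j]
    have hπ : π = π' := by
      funext j
      apply Equiv.ext
      intro a
      have h1 := congrFun (hfun j) a
      rw [hσeq j] at h1
      exact ((hsm σ' j).injective) h1
    subst hπ
    have hσ : σ = σ' := by
      apply Subtype.ext
      apply Equiv.ext
      intro y
      have := happ ((auxBlockPerm c π).symm y)
      simpa using this
    rw [hσ]
  have hF_surj : Function.Surjective F := by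
    intro τ
    set π : ∀ j, Equiv.Perm (Fin (c.blocksFun j)) :=
      fun j => (Tuple.sort (fun a => τ (c.embedding j a)))⁻¹ with hπ
    set σ0 : Equiv.Perm (Fin n) := (auxBlockPerm c π).symm.trans τ with hσ0
    have hσ0app : ∀ j a, σ0 (c.embedding j a)
        = τ (c.embedding j (Tuple.sort (fun a => τ (c.embedding j a)) a)) := by
      intro j a
      rw [hσ0]
      simp only [Equiv.trans_apply]
      rw [auxBlockPerm_symm_apply]
      congr 2
    have hmono : p σ0 := by
      intro j
      have := Tuple.monotone_sort (fun a => τ (c.embedding j a))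
      intro a b hab
      have h2 := this hab
      simp only [Function.comp_apply] at h2
      dsimp only
      rw [hσ0app, hσ0app]
      exact h2
    refine ⟨⟨⟨σ0, hmono⟩, π⟩, ?_⟩
    apply Equiv.ext
    intro y
    rw [hFapp]
    simp [hσ0]
  have hcard : Fintype.card {σ : Equiv.Perm (Fin n) // p σ}
      * ∏ j, Nat.factorial (c.blocksFun j) = Nat.factorial n := by
    have := Fintype.card_congr (Equiv.ofBijective F ⟨hF_inj, hF_surj⟩)
    rw [Fintype.card_prod, Fintype.card_pi] at this
    simp only [Fintype.card_perm, Fintype.card_fin] at this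
    exact this
  have hms := Nat.multinomial_spec (Finset.univ : Finset (Fin c.length)) c.blocksFun
  rw [c.sum_blocksFun] at hms
  have hpos : 0 < ∏ j, Nat.factorial (c.blocksFun j) :=
    Finset.prod_pos fun j _ => Nat.factorial_pos _
  have : Fintype.card {σ : Equiv.Perm (Fin n) // p σ} = Nat.multinomial Finset.univ c.blocksFun := by
    apply Nat.eq_of_mul_eq_mul_right hpos
    rw [hcard, ← hms]
    ring
  rw [← this, Fintype.card_subtype]

lemma aux_card_words (n k : ℕ) (hk : 1 ≤ k) (c : Composition n) :
    ((Finset.univ : Finset (Fin n → Fin k)).filter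
      (fun w => ∀ j : Fin c.length, Monotone fun a => w (c.embedding j a))).card
      = ∏ j : Fin c.length, (c.blocksFun j + k - 1).choose (c.blocksFun j) := by
  have key : ∀ (F : ∀ j, {f : Fin (c.blocksFun j) → Fin k // Monotone f})
      (j : Fin c.length) (a : Fin (c.blocksFun j)),
      (fun p : Σ j, Fin (c.blocksFun j) => (F p.1).1 p.2) (c.blocksFinEquiv.symm (c.embedding j a))
        = (F j).1 a := by
    intro F j a
    have h : c.blocksFinEquiv.symm (c.embedding j a) = ⟨j, a⟩ := by
      rw [Equiv.symm_apply_eq]; rfl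
    rw [h]
  have e : {w : Fin n → Fin k // ∀ j : Fin c.length, Monotone fun a => w (c.embedding j a)}
      ≃ ∀ j, {f : Fin (c.blocksFun j) → Fin k // Monotone f} := by
    refine
      { toFun := fun w j => ⟨fun a => w.1 (c.embedding j a), w.2 j⟩
        invFun := fun F => ⟨fun x =>
          (fun p : Σ j, Fin (c.blocksFun j) => (F p.1).1 p.2) (c.blocksFinEquiv.symm x), ?_⟩
        left_inv := ?_
        right_inv := ?_ }
    · intro j
      have : (fun a => (fun p : Σ j, Fin (c.blocksFun j) => (F p.1).1 p.2)
          (c.blocksFinEquiv.symm (c.embedding j a))) = fun a => (F j).1 a := by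
        funext a; exact key F j a
      rw [this]
      exact (F j).2
    · rintro ⟨w, hw⟩
      apply Subtype.ext
      funext x
      exact congrArg w (c.blocksFinEquiv.apply_symm_apply x)
    · intro F
      funext j
      apply Subtype.ext
      funext a
      exact key F j a
  rw [← Fintype.card_subtype, Fintype.card_congr e, Fintype.card_pi]
  exact Finset.prod_congr rfl fun j _ => aux_card_monotone _ _ hk

/-- The set of interior boundaries of a composition, as a subset of `Fin (n-1)`. -/
def auxE (n : ℕ) : Composition n ≃ Finset (Fin (n - 1)) :=
  (compositionEquiv n).trans (compositionAsSetEquiv n)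

lemma aux_memE {n : ℕ} (c : Composition n) (i : Fin (n - 1)) :
    i ∈ auxE n c ↔ ∃ t : Fin (c.length + 1), c.sizeUpTo t = (i : ℕ) + 1 := by
  simp only [auxE, Equiv.trans_apply, compositionAsSetEquiv, Equiv.coe_fn_mk,
    Set.mem_toFinset, Set.mem_setOf_eq]
  have hb : (compositionEquiv n c).boundaries = c.boundaries := rfl
  rw [hb]
  simp only [Composition.boundaries, Finset.mem_map, Finset.mem_univ, true_and]
  constructor
  · rintro ⟨t, ht⟩
    refine ⟨t, ?_⟩
    have := congrArg Fin.val ht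
    simp only [Composition.boundary, OrderEmbedding.coe_ofStrictMono] at this
    simp at this ⊢
    omega
  · rintro ⟨t, ht⟩
    refine ⟨t, ?_⟩
    apply Fin.ext
    simp only [Composition.boundary, OrderEmbedding.coe_ofStrictMono]
    simp
    omega

lemma aux_sizeUpTo_lt {n : ℕ} (c : Composition n) {u v : ℕ} (h : u < v) (hv : v ≤ c.length) :
    c.sizeUpTo u < c.sizeUpTo v :=
  lt_of_lt_of_le (c.sizeUpTo_strict_mono (by omega)) (c.monotone_sizeUpTo (by omega))

lemma aux_cardE {n : ℕ} (hn : 1 ≤ n) (c : Composition n) :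
    (auxE n c).card = c.length - 1 := by
  have hlen : c.length ≤ n := c.length_le
  have key : ∀ t ∈ Finset.Ico 1 c.length, c.sizeUpTo t - 1 < n - 1 := by
    intro t ht
    rw [Finset.mem_Ico] at ht
    have h1 : 0 < c.sizeUpTo t := by
      have : c.sizeUpTo 0 < c.sizeUpTo t := aux_sizeUpTo_lt c (by omega) (by omega)
      simpa using this
    have h2 : c.sizeUpTo t < c.sizeUpTo c.length := aux_sizeUpTo_lt c ht.2 le_rfl
    rw [c.sizeUpTo_length] at h2
    omega
  rw [← Nat.card_Ico 1 c.length]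
  symm
  apply Finset.card_bij (fun t ht => (⟨c.sizeUpTo t - 1, key t ht⟩ : Fin (n - 1)))
  · intro t ht
    rw [aux_memE]
    rw [Finset.mem_Ico] at ht
    have h1 : 0 < c.sizeUpTo t := by
      have : c.sizeUpTo 0 < c.sizeUpTo t := aux_sizeUpTo_lt c (by omega) (by omega)
      simpa using this
    exact ⟨⟨t, by omega⟩, by simp; omega⟩
  · intro t ht t' ht' hh
    rw [Finset.mem_Ico] at ht ht'
    have h1 : 0 < c.sizeUpTo t := by
      have : c.sizeUpTo 0 < c.sizeUpTo t := aux_sizeUpTo_lt c (by omega) (by omega)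
      simpa using this
    have h1' : 0 < c.sizeUpTo t' := by
      have : c.sizeUpTo 0 < c.sizeUpTo t' := aux_sizeUpTo_lt c (by omega) (by omega)
      simpa using this
    have hval : c.sizeUpTo t = c.sizeUpTo t' := by
      have := congrArg Fin.val hh
      simp at this
      omega
    by_contra hne
    rcases Nat.lt_or_ge t t' with h | h
    · have := aux_sizeUpTo_lt c h (by omega); omega
    · have h' : t' < t := by omega
      have := aux_sizeUpTo_lt c h' (by omega); omega
  · intro i hi
    rw [aux_memE] at hi
    obtain ⟨t, ht⟩ := hi
    have ht1 : 1 ≤ (t : ℕ) := by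
      by_contra hh
      have : (t : ℕ) = 0 := by omega
      rw [this] at ht
      simp at ht
    have ht2 : (t : ℕ) < c.length := by
      by_contra hh
      push_neg at hh
      rw [c.sizeUpTo_ofLength_le _ hh] at ht
      have := i.2
      omega
    refine ⟨t, Finset.mem_Ico.2 ⟨ht1, ht2⟩, ?_⟩
    apply Fin.ext
    simp only
    omega

lemma aux_fact3 {n : ℕ} (c : Composition n) (i : Fin (n - 1))
    (hi1 : (i : ℕ) < n) (hi2 : (i : ℕ) + 1 < n) :
    i ∉ auxE n c ↔ c.index ⟨i, hi1⟩ = c.index ⟨(i : ℕ) + 1, hi2⟩ := by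
  set a : Fin n := ⟨i, hi1⟩
  set b : Fin n := ⟨(i : ℕ) + 1, hi2⟩
  rw [aux_memE, not_exists]
  have h1 : c.sizeUpTo (c.index a) ≤ (i : ℕ) := c.sizeUpTo_index_le a
  have h3 : c.sizeUpTo (c.index b) ≤ (i : ℕ) + 1 := c.sizeUpTo_index_le b
  have h4 : (i : ℕ) + 1 < c.sizeUpTo ((c.index b) + 1) := c.lt_sizeUpTo_index_succ b
  constructor
  · intro h
    have hne : c.sizeUpTo (c.index b) ≠ (i : ℕ) + 1 :=
      fun hh => h ((c.index b).castSucc) (by simpa using hh)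
    have hle : c.sizeUpTo (c.index b) ≤ (i : ℕ) := by omega
    have hmem : a ∈ Set.range (c.embedding (c.index b)) := by
      rw [Composition.mem_range_embedding_iff]
      refine ⟨hle, ?_⟩
      have hx : ((i:ℕ)) < c.sizeUpTo ((c.index b : ℕ) + 1) := by omega
      simpa [Nat.succ_eq_add_one] using hx
    have := c.mem_range_embedding_iff'.1 hmem
    exact this.symm
  · intro heq t ht
    have h4' : (i : ℕ) + 1 < c.sizeUpTo ((c.index a) + 1) := by rw [heq]; exact h4
    rcases Nat.lt_or_ge (t : ℕ) ((c.index a : ℕ) + 1) with hlt | hge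
    · have : c.sizeUpTo t ≤ c.sizeUpTo (c.index a) := c.monotone_sizeUpTo (by omega)
      omega
    · have : c.sizeUpTo ((c.index a) + 1) ≤ c.sizeUpTo t := c.monotone_sizeUpTo (by omega)
      omega


/-- The "rise at position i" predicate. -/
def auxP {n k : ℕ} (σ : Equiv.Perm (Fin n)) (w : Fin n → Fin k) (i : Fin (n - 1)) : Prop :=
  ∃ p : Fin n × Fin n, (p.1 : ℕ) = (i : ℕ) ∧ (p.2 : ℕ) = (i : ℕ) + 1 ∧
    σ p.1 < σ p.2 ∧ (w p.1 : ℕ) ≤ (w p.2 : ℕ)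

lemma aux_fact4 {n k : ℕ} (c : Composition n) (σ : Equiv.Perm (Fin n)) (w : Fin n → Fin k) :
    (∀ i ∈ (auxE n c)ᶜ, auxP σ w i) ↔
      (∀ j : Fin c.length, Monotone fun a => σ (c.embedding j a)) ∧
      (∀ j : Fin c.length, Monotone fun a => w (c.embedding j a)) := by
  constructor
  · intro h
    have step : ∀ (j : Fin c.length) (a : ℕ) (ha : a + 1 < c.blocksFun j),
        σ (c.embedding j ⟨a, by omega⟩) < σ (c.embedding j ⟨a + 1, ha⟩) ∧
        (w (c.embedding j ⟨a, by omega⟩) : ℕ) ≤ (w (c.embedding j ⟨a + 1, ha⟩) : ℕ) := by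
      intro j a ha
      set p : Fin n := c.embedding j ⟨a, by omega⟩ with hp
      set q : Fin n := c.embedding j ⟨a + 1, ha⟩ with hq
      have hpq : (q : ℕ) = (p : ℕ) + 1 := by
        rw [hp, hq]; simp [Composition.coe_embedding]; omega
      have hip : (p : ℕ) < n - 1 := by have := q.2; omega
      set i : Fin (n - 1) := ⟨(p : ℕ), hip⟩ with hi
      have hval : (i : ℕ) = (p : ℕ) := rfl
      have hp2 := p.2
      have hq2 := q.2
      have hi1 : (i : ℕ) < n := by omega
      have hi2 : (i : ℕ) + 1 < n := by omega
      have hmem : i ∈ (auxE n c)ᶜ := by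
        rw [Finset.mem_compl, aux_fact3 c i hi1 hi2]
        have e1 : (⟨(i : ℕ), hi1⟩ : Fin n) = p := Fin.ext rfl
        have e2 : (⟨(i : ℕ) + 1, hi2⟩ : Fin n) = q := Fin.ext (show (i : ℕ) + 1 = (q : ℕ) by omega)
        rw [e1, e2, hp, hq, c.index_embedding, c.index_embedding]
      obtain ⟨pr, hpr1, hpr2, hlt, hle⟩ := h i hmem
      have ep : pr.1 = p := Fin.ext (by omega)
      have eq' : pr.2 = q := Fin.ext (by omega)
      rw [ep, eq'] at hlt hle
      exact ⟨hlt, hle⟩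
    constructor
    · intro j
      apply aux_monotone_of_adjacent
      intro a ha
      exact (step j a ha).1.le
    · intro j
      apply aux_monotone_of_adjacent
      intro a ha
      have := (step j a ha).2
      exact this
  · rintro ⟨hA, hB⟩ i hi
    have hi1 : (i : ℕ) < n := by have := i.2; omega
    have hi2 : (i : ℕ) + 1 < n := by have := i.2; omega
    set a : Fin n := ⟨i, hi1⟩ with hadef
    set b : Fin n := ⟨(i : ℕ) + 1, hi2⟩ with hbdef
    have e1 : (a : ℕ) = (i : ℕ) := rfl
    have e2 : (b : ℕ) = (i : ℕ) + 1 := rfl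
    have heq : c.index a = c.index b := (aux_fact3 c i hi1 hi2).1 (Finset.mem_compl.1 hi)
    set j := c.index a with hj
    have ha' : a ∈ Set.range (c.embedding j) := c.mem_range_embedding a
    have hb' : b ∈ Set.range (c.embedding j) := by
      rw [c.mem_range_embedding_iff']; exact heq
    obtain ⟨u, hu⟩ := ha'
    obtain ⟨v, hv⟩ := hb'
    have huv : u < v := by
      have hu' := congrArg Fin.val hu
      have hv' := congrArg Fin.val hv
      simp only [Composition.coe_embedding] at hu' hv'
      rw [Fin.lt_def]
      omega
    refine ⟨(a, b), rfl, rfl, ?_, ?_⟩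
    · have hle : σ (c.embedding j u) ≤ σ (c.embedding j v) := hA j huv.le
      rw [hu, hv] at hle
      refine lt_of_le_of_ne hle fun hh => ?_
      have h5 := σ.injective hh
      have h6 : (a : ℕ) = (b : ℕ) := congrArg Fin.val h5
      omega
    · have hle : w (c.embedding j u) ≤ w (c.embedding j v) := hB j huv.le
      rw [hu, hv] at hle
      exact hle

theorem statement19 (k n : ℕ) (hk : 2 ≤ k) (hn : 1 ≤ n) :
    (((Finset.univ : Finset (Equiv.Perm (Fin n) × (Fin n → Fin k))).filter
        (fun sw => ¬ ∃ p : Fin n × Fin n, (p.2 : ℕ) = (p.1 : ℕ) + 1 ∧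
          sw.1 p.1 < sw.1 p.2 ∧ (sw.2 p.1 : ℕ) ≤ (sw.2 p.2 : ℕ))).card : ℤ)
      = ∑ c : Composition n, (-1 : ℤ) ^ (n - c.length) *
          (Nat.multinomial Finset.univ c.blocksFun : ℤ) *
          ∏ i : Fin c.length, ((c.blocksFun i + k - 1).choose (c.blocksFun i) : ℤ) := by
  have hpred : ∀ x : Equiv.Perm (Fin n) × (Fin n → Fin k),
      (¬ ∃ p : Fin n × Fin n, (p.2 : ℕ) = (p.1 : ℕ) + 1 ∧
        x.1 p.1 < x.1 p.2 ∧ (x.2 p.1 : ℕ) ≤ (x.2 p.2 : ℕ))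
      ↔ ∀ i : Fin (n - 1), ¬ auxP x.1 x.2 i := by
    intro x
    constructor
    · rintro h i ⟨p, hp1, hp2, hlt, hle⟩
      exact h ⟨p, by omega, hlt, hle⟩
    · rintro h ⟨p, hp, hlt, hle⟩
      have hp1 : (p.1 : ℕ) < n - 1 := by have := p.2.2; omega
      exact h ⟨(p.1 : ℕ), hp1⟩ ⟨p, rfl, by exact hp, hlt, hle⟩
  have hfilter : ((Finset.univ : Finset (Equiv.Perm (Fin n) × (Fin n → Fin k))).filter
        (fun sw => ¬ ∃ p : Fin n × Fin n, (p.2 : ℕ) = (p.1 : ℕ) + 1 ∧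
          sw.1 p.1 < sw.1 p.2 ∧ (sw.2 p.1 : ℕ) ≤ (sw.2 p.2 : ℕ)))
      = (@Finset.filter _ (fun a : Equiv.Perm (Fin n) × (Fin n → Fin k) =>
          ∀ i : Fin (n - 1), ¬ auxP a.1 a.2 i)
          (fun a => Fintype.decidableForallFintype) Finset.univ) := by
    ext x
    simp only [Finset.mem_filter, Finset.mem_univ, true_and]
    exact hpred x
  rw [hfilter]
  have hIE := aux_inclusion_exclusion (fun (i : Fin (n - 1))
      (x : Equiv.Perm (Fin n) × (Fin n → Fin k)) => auxP x.1 x.2 i)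
  refine Eq.trans hIE ?_
  have hbij : Function.Bijective (fun c : Composition n => (auxE n c)ᶜ) := by
    have h2 : Function.Bijective (fun S : Finset (Fin (n - 1)) => Sᶜ) :=
      Function.Involutive.bijective (fun S => compl_compl S)
    exact h2.comp (auxE n).bijective
  refine Eq.symm (Fintype.sum_bijective _ hbij _ _ ?_)
  intro c
  have hlen1 : 1 ≤ c.length := c.length_pos_of_pos (by omega)
  have hlen2 : c.length ≤ n := c.length_le
  have hcard : ((auxE n c)ᶜ).card = n - c.length := by
    rw [Finset.card_compl, aux_cardE hn c]
    simp only [Fintype.card_fin]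
    omega
  have hprod : ((Finset.univ : Finset (Equiv.Perm (Fin n) × (Fin n → Fin k))).filter
        (fun x => (∀ j : Fin c.length, Monotone fun a => x.1 (c.embedding j a)) ∧
          (∀ j : Fin c.length, Monotone fun a => x.2 (c.embedding j a)))).card
      = ((Finset.univ : Finset (Equiv.Perm (Fin n))).filter
          (fun σ => ∀ j : Fin c.length, Monotone fun a => σ (c.embedding j a))).card
        * ((Finset.univ : Finset (Fin n → Fin k)).filter
          (fun w => ∀ j : Fin c.length, Monotone fun a => w (c.embedding j a))).card := by
    have hcongr := Fintype.card_congr (Equiv.subtypeProdEquivProd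
      (p := fun σ : Equiv.Perm (Fin n) => ∀ j : Fin c.length,
        Monotone fun a => σ (c.embedding j a))
      (q := fun w : Fin n → Fin k => ∀ j : Fin c.length,
        Monotone fun a => w (c.embedding j a)))
    rw [Fintype.card_prod, Fintype.card_subtype, Fintype.card_subtype,
      Fintype.card_subtype] at hcongr
    exact hcongr
  have hgoal : ∀ (h : DecidablePred fun a : Equiv.Perm (Fin n) × (Fin n → Fin k) =>
      ∀ i ∈ (auxE n c)ᶜ, auxP a.1 a.2 i),
      (@Finset.filter (Equiv.Perm (Fin n) × (Fin n → Fin k))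
          (fun a => ∀ i ∈ (auxE n c)ᶜ, auxP a.1 a.2 i) h Finset.univ).card
        = Nat.multinomial Finset.univ c.blocksFun
          * ∏ j : Fin c.length, ((c.blocksFun j + k - 1).choose (c.blocksFun j)) := by
    intro h
    have h0 : @Finset.filter (Equiv.Perm (Fin n) × (Fin n → Fin k))
          (fun a => ∀ i ∈ (auxE n c)ᶜ, auxP a.1 a.2 i) h Finset.univ
        = Finset.univ.filter (fun x : Equiv.Perm (Fin n) × (Fin n → Fin k) =>
            (∀ j : Fin c.length, Monotone fun a => x.1 (c.embedding j a)) ∧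
            (∀ j : Fin c.length, Monotone fun a => x.2 (c.embedding j a))) := by
      ext x
      simp only [Finset.mem_filter, Finset.mem_univ, true_and]
      exact aux_fact4 c x.1 x.2
    rw [h0]
    rw [hprod]
    rw [aux_card_perm n c]
    have hk1 : 1 ≤ k := le_trans one_le_two hk
    rw [aux_card_words n k hk1 c]
  rw [hcard, hgoal]
  push_cast
  ring
end
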